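/- arXiv:2405.11692 — 5 statements merged into one kernel-verified Lean document; each statement's English description precedes it below -/
import Mathlib

section
/- For integers $0 \le j \le n-1$ and real $\beta > 0$, one has $\Gamma_\beta^{n,2n-j} + \sum_{i=1}^{n-j} (-1)^i \binom{n+1-j}{i} \Gamma_\beta^{n-i+1,n} \Gamma_\beta^{n,2n-i-j} + (-1)^{n-j+1} \Gamma_\beta^{j,n} = 0$. -/
open Finset

/-- `Γ_β^{m,M} = ∏_{i=m}^{M} (β + i)`. -/
noncomputable def Gam (β : ℝ) (m M : ℕ) : ℝ := ∏ i ∈ Finset.Icc m M, (β + (i : ℝ))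

noncomputable def asc (x : ℝ) (m : ℕ) : ℝ := ∏ k ∈ Finset.range m, (x + k)
noncomputable def des (x : ℝ) (m : ℕ) : ℝ := ∏ k ∈ Finset.range m, (x - k)

lemma asc_succ (x : ℝ) (m : ℕ) : asc x (m+1) = asc x m * (x + m) := Finset.prod_range_succ _ _
lemma des_succ (x : ℝ) (m : ℕ) : des x (m+1) = des x m * (x - m) := Finset.prod_range_succ _ _

noncomputable def S (x : ℝ) (M : ℕ) : ℝ :=
  ∑ i ∈ Finset.range (M+1), (-1:ℝ)^i * (M.choose i : ℝ) * des x i * asc x (M - i)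

lemma S_rec (x : ℝ) (M : ℕ) : S x (M+1) = M * S x M := by
  have key : ∀ i ∈ Finset.range (M+1),
      (-1:ℝ)^(i+1) * ((M+1).choose (i+1) : ℝ) * des x (i+1) * asc x (M+1-(i+1))
      = ((-1:ℝ)^(i+1) * (M.choose i : ℝ) * (des x i * (x - i)) * asc x (M-i))
        + ((-1:ℝ)^(i+1) * (M.choose (i+1) : ℝ) * des x (i+1) * asc x (M-i)) := by
    intro i _
    rw [Nat.choose_succ_succ, Nat.succ_sub_succ, des_succ]
    push_cast
    ring
  have h0 : S x (M+1)
      = (∑ i ∈ Finset.range (M+1),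
          (-1:ℝ)^(i+1) * (M.choose i : ℝ) * (des x i * (x - i)) * asc x (M-i))
        + ((∑ i ∈ Finset.range (M+1),
          (-1:ℝ)^(i+1) * (M.choose (i+1) : ℝ) * des x (i+1) * asc x (M-i))
          + (-1:ℝ)^0 * ((M+1).choose 0 : ℝ) * des x 0 * asc x (M+1-0)) := by
    rw [S, Finset.sum_range_succ', Finset.sum_congr rfl key, Finset.sum_add_distrib]
    ring
  have h1 : (∑ i ∈ Finset.range (M+1),
          (-1:ℝ)^(i+1) * (M.choose (i+1) : ℝ) * des x (i+1) * asc x (M-i))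
        + (-1:ℝ)^0 * ((M+1).choose 0 : ℝ) * des x 0 * asc x (M+1-0)
      = ∑ i ∈ Finset.range (M+1),
          (-1:ℝ)^i * (M.choose i : ℝ) * des x i * (asc x (M-i) * (x + ((M:ℝ)-i))) := by
    have h2 : (∑ i ∈ Finset.range (M+2),
          (-1:ℝ)^i * (M.choose i : ℝ) * des x i * asc x (M+1-i))
        = (∑ i ∈ Finset.range (M+1),
          (-1:ℝ)^(i+1) * (M.choose (i+1) : ℝ) * des x (i+1) * asc x (M+1-(i+1)))
          + (-1:ℝ)^0 * (M.choose 0 : ℝ) * des x 0 * asc x (M+1-0) :=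
      Finset.sum_range_succ' _ _
    have h3 : (∑ i ∈ Finset.range (M+2),
          (-1:ℝ)^i * (M.choose i : ℝ) * des x i * asc x (M+1-i))
        = (∑ i ∈ Finset.range (M+1),
          (-1:ℝ)^i * (M.choose i : ℝ) * des x i * asc x (M+1-i)) := by
      rw [Finset.sum_range_succ, Nat.choose_succ_self]
      simp
    simp only [Nat.succ_sub_succ] at h2
    rw [show ((M+1).choose 0 : ℝ) = (M.choose 0 : ℝ) by simp, ← h2, h3]
    refine Finset.sum_congr rfl fun i hi => ?_
    rw [Finset.mem_range] at hi
    have hiM : i ≤ M := by omega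
    have : M + 1 - i = (M - i) + 1 := by omega
    rw [this, asc_succ]
    have : ((M - i : ℕ) : ℝ) = (M : ℝ) - i := by
      push_cast [hiM]; ring
    rw [this]
  rw [h0, h1, ← Finset.sum_add_distrib, S, Finset.mul_sum]
  refine Finset.sum_congr rfl fun i hi => ?_
  ring

lemma S_eq_zero (x : ℝ) (M : ℕ) (hM : 1 ≤ M) : S x M = 0 := by
  induction M with
  | zero => omega
  | succ M ih =>
    rcases Nat.eq_or_lt_of_le hM with h | h
    · obtain rfl : M = 0 := by omega
      simp [S, Finset.sum_range_succ, des, asc]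
    · rw [S_rec, ih (by omega), mul_zero]

lemma Gam_des (β : ℝ) (a b n : ℕ) (h : a + b = n) :
    des (β + n) (b + 1) = Gam β a n := by
  subst h
  rw [des, Gam, ← Finset.prod_range_reflect]
  rw [show Finset.Icc a (a+b) = Finset.Ico a (a+b+1) by rw [Finset.Ico_add_one_right_eq_Icc],
    Finset.prod_Ico_eq_prod_range]
  have : a + b + 1 - a = b + 1 := by omega
  rw [this]
  refine Finset.prod_congr rfl fun k hk => ?_
  rw [Finset.mem_range] at hk
  have h1 : b + 1 - 1 - k = b - k := by omega
  rw [h1]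
  have : ((b - k : ℕ) : ℝ) = (b : ℝ) - k := by push_cast [Nat.lt_succ_iff.mp hk]; ring
  rw [this]
  push_cast
  ring

lemma Gam_asc (β : ℝ) (n t M : ℕ) (h : n + t = M) :
    asc (β + n) (t + 1) = Gam β n M := by
  subst h
  rw [asc, Gam]
  rw [show Finset.Icc n (n+t) = Finset.Ico n (n+t+1) by rw [Finset.Ico_add_one_right_eq_Icc],
    Finset.prod_Ico_eq_prod_range]
  have : n + t + 1 - n = t + 1 := by omega
  rw [this]
  refine Finset.prod_congr rfl fun k _ => ?_
  push_cast
  ring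

theorem stmt0 (n j : ℕ) (hn : 1 ≤ n) (hj : j ≤ n - 1) (β : ℝ) (hβ : 0 < β) :
    Gam β n (2 * n - j)
      + ∑ i ∈ Finset.Icc 1 (n - j), (-1 : ℝ) ^ i * ((n + 1 - j).choose i : ℝ)
          * Gam β (n - i + 1) n * Gam β n (2 * n - i - j)
      + (-1 : ℝ) ^ (n - j + 1) * Gam β j n = 0 := by
  obtain ⟨m, rfl⟩ : ∃ m, n = j + m := ⟨n - j, by omega⟩
  have hm : 1 ≤ m := by omega
  set x : ℝ := β + (j + m : ℕ) with hx
  have hS := S_eq_zero x (m + 1) (by omega)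
  rw [S] at hS
  rw [Finset.sum_range_succ, Finset.sum_range_succ'] at hS
  -- hS : (∑ i ∈ range m, f (i+1)) + f 0 + f (m+1) = 0
  have e1 : (2 * (j + m) - j) = (j + m) + m := by omega
  have e2 : (j + m - j) = m := by omega
  rw [e1, e2]
  have hf0 : (-1:ℝ)^0 * ((m+1).choose 0 : ℝ) * des x 0 * asc x (m + 1 - 0)
      = Gam β (j+m) ((j+m)+m) := by
    simp only [pow_zero, Nat.choose_zero_right, Nat.cast_one, des, Finset.range_zero,
      Finset.prod_empty, Nat.sub_zero, one_mul, mul_one]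
    exact Gam_asc β (j+m) m ((j+m)+m) rfl
  have hftop : (-1:ℝ)^(m+1) * ((m+1).choose (m+1) : ℝ) * des x (m+1) * asc x (m+1-(m+1))
      = (-1:ℝ)^(m+1) * Gam β j (j+m) := by
    rw [Nat.choose_self, Nat.sub_self]
    rw [Gam_des β j m (j+m) rfl]
    simp [asc]
  have hmid : ∀ i ∈ Finset.range m,
      (-1:ℝ)^(i+1) * ((m+1).choose (i+1) : ℝ) * des x (i+1) * asc x (m+1-(i+1))
      = (-1:ℝ)^(1+i) * ((j + m + 1 - j).choose (1+i) : ℝ)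
          * Gam β (j + m - (1+i) + 1) (j + m) * Gam β (j + m) (2*(j+m) - (1+i) - j) := by
    intro i hi
    rw [Finset.mem_range] at hi
    have e3 : j + m + 1 - j = m + 1 := by omega
    have e4 : j + m - (1+i) + 1 = j + (m - i) := by omega
    have e5 : 2*(j+m) - (1+i) - j = (j + m) + (m - i - 1) := by omega
    have e6 : m + 1 - (i+1) = (m - i - 1) + 1 := by omega
    have e7 : (1:ℕ) + i = i + 1 := by omega
    rw [e3, e4, e5, e6, e7]
    rw [Gam_asc β (j+m) (m-i-1) ((j+m)+(m-i-1)) rfl]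
    rw [show des x (i+1) = Gam β (j + (m-i)) (j+m) from Gam_des β (j+(m-i)) i (j+m) (by omega)]
  have hsum : ∑ i ∈ Finset.Icc 1 m, (-1:ℝ)^i * ((j + m + 1 - j).choose i : ℝ)
          * Gam β (j + m - i + 1) (j + m) * Gam β (j + m) (2*(j+m) - i - j)
      = ∑ i ∈ Finset.range m,
      (-1:ℝ)^(i+1) * ((m+1).choose (i+1) : ℝ) * des x (i+1) * asc x (m+1-(i+1)) := by
    rw [show Finset.Icc 1 m = Finset.Ico 1 (m+1) by rw [Finset.Ico_add_one_right_eq_Icc],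
      Finset.sum_Ico_eq_sum_range]
    rw [show m + 1 - 1 = m by omega]
    exact (Finset.sum_congr rfl hmid).symm
  rw [hsum, ← hf0, ← Gam_des β j m (j+m) rfl]
  have : (-1:ℝ)^(m+1) * des x (m+1)
      = (-1:ℝ)^(m+1) * ((m+1).choose (m+1) : ℝ) * des x (m+1) * asc x (m+1-(m+1)) := by
    rw [Nat.choose_self, Nat.sub_self]; simp [asc]
  rw [this]
  linarith [hS]
end

section
/- Let $0 < p < \infty$, $\gamma > 1 + 2/p$, and for $w \in \mathbb{D}$ set $K_w^{[0]}(z) = (1-\bar{w}z)^{-\gamma}$ and $K_w^{[1]}(z) = z(1-\bar{w}z)^{-(\gamma+1)}$. Then there exists a constant $c > 0$ independent of $w$ such that for all complex numbers $\alpha_0, \alpha_1$ and all $w \in \mathbb{D}$: $\|\alpha_0 K_w^{[0]} + \alpha_1 K_w^{[1]}\|_p \ge c \left( |\alpha_0| (1-|w|^2)^{-(\gamma - 2/p)} + |\alpha_1| (1-|w|^2)^{-(\gamma + 1 - 2/p)} \right)$. -/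
set_option maxHeartbeats 1000000

open MeasureTheory Metric Complex Finset
open scoped ENNReal NNReal

/-- The normalized area measure `dA = dxdy/π` on the unit disc. -/
noncomputable def dA : Measure ℂ :=
  (ENNReal.ofReal Real.pi)⁻¹ • ((volume : Measure ℂ).restrict (ball (0 : ℂ) 1))

/-- The Bergman "norm" `‖f‖_p = (∫_𝔻 |f|^p dA)^{1/p}`, valued in `ℝ≥0∞`. -/
noncomputable def Bnorm (p : ℝ) (f : ℂ → ℂ) : ℝ≥0∞ :=
  (∫⁻ z, (‖f z‖₊ : ℝ≥0∞) ^ p ∂dA) ^ (1 / p)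

/-- Membership in the Bergman space `A^p`. -/
def MemAp (p : ℝ) (f : ℂ → ℂ) : Prop :=
  DifferentiableOn ℂ f (ball (0 : ℂ) 1) ∧ (∫⁻ z, (‖f z‖₊ : ℝ≥0∞) ^ p ∂dA) < ⊤

theorem stmt4 (p γ : ℝ) (hp : 0 < p) (hγ : 1 + 2 / p < γ) :
    ∃ c : ℝ, 0 < c ∧ ∀ (α₀ α₁ : ℂ), ∀ w ∈ ball (0 : ℂ) 1,
      ENNReal.ofReal (c * (‖α₀‖ * (1 - ‖w‖ ^ 2) ^ (-(γ - 2 / p))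
          + ‖α₁‖ * (1 - ‖w‖ ^ 2) ^ (-(γ + 1 - 2 / p))))
        ≤ Bnorm p (fun z =>
            α₀ * ((1 - (starRingEnd ℂ) w * z) ^ (-(γ : ℂ)))
            + α₁ * (z * (1 - (starRingEnd ℂ) w * z) ^ (-((γ : ℂ) + 1)))) := by
  have h2p : 0 < 2 / p := by positivity
  have hip : (0:ℝ) ≤ 1 / p := by positivity
  have hγ1 : 0 < γ + 1 := by linarith
  have hP4 : (0:ℝ) < (3/2 : ℝ) ^ (γ + 1) := Real.rpow_pos_of_pos (by norm_num) _
  refine ⟨(3/64 : ℝ) ^ (1/p) / (48 * (3/2 : ℝ) ^ (γ + 1)), by positivity, ?_⟩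
  set c : ℝ := (3/64 : ℝ) ^ (1/p) / (48 * (3/2 : ℝ) ^ (γ + 1)) with hc
  have hc0 : 0 < c := by rw [hc]; positivity
  clear_value c
  intro α₀ α₁ w hw
  have hα₀nn : 0 ≤ ‖α₀‖ := norm_nonneg α₀
  have hα₁nn : 0 ≤ ‖α₁‖ := norm_nonneg α₁
  set b : ℝ := ‖w‖ with hbdef
  have hb0 : 0 ≤ b := norm_nonneg w
  have hb1 : b < 1 := by
    rw [mem_ball_zero_iff] at hw; simpa [hbdef] using hw
  set t : ℝ := 1 - b ^ 2 with htdef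
  have ht : 0 < t := by rw [htdef]; nlinarith
  have ht1 : t ≤ 1 := by rw [htdef]; nlinarith
  set ρ : ℝ := (1 - b) / 2 with hρdef
  have hρ : 0 < ρ := by rw [hρdef]; linarith
  have hρt : t / 4 ≤ ρ := by rw [hρdef, htdef]; nlinarith
  have hρt2 : ρ ≤ t / 2 := by rw [hρdef, htdef]; nlinarith
  clear_value t ρ
  set β : ℂ := α₁ - α₀ * (starRingEnd ℂ) w with hβdef
  set u : ℂ := α₀ + β * w with hudef
  clear_value β u
  have hu0 : 0 ≤ ‖u‖ := norm_nonneg u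
  have hβnn : 0 ≤ ‖β‖ := norm_nonneg β
  set S : ℝ := ‖α₀‖ * t + ‖α₁‖ with hSdef
  set m : ℝ := (‖u‖ + ‖β‖ * ρ) / 6 with hmdef
  clear_value S m
  have hS0 : 0 ≤ S := by
    rw [hSdef]; exact add_nonneg (mul_nonneg hα₀nn ht.le) hα₁nn
  have hm0 : 0 ≤ m := by
    rw [hmdef]
    have := mul_nonneg hβnn hρ.le
    linarith
  set q : ℝ := m * (3/2 * t) ^ (-(γ + 1)) with hqdef
  clear_value q
  have hq0 : 0 ≤ q := by
    rw [hqdef]; exact mul_nonneg hm0 (Real.rpow_nonneg (by linarith) _)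
  set R : ℝ := ‖α₀‖ * t ^ (-(γ - 2 / p))
      + ‖α₁‖ * t ^ (-(γ + 1 - 2 / p)) with hRdef
  clear_value R
  have hR0 : 0 ≤ R := by
    rw [hRdef]
    exact add_nonneg (mul_nonneg hα₀nn (Real.rpow_nonneg ht.le _))
      (mul_nonneg hα₁nn (Real.rpow_nonneg ht.le _))
  have hcR0 : 0 ≤ c * R := mul_nonneg hc0.le hR0
  -- abs (1 - conj w * w) = t
  have habs1 : ‖1 - (starRingEnd ℂ) w * w‖ = t := by
    have e : (1 : ℂ) - (starRingEnd ℂ) w * w = ((1 - b ^ 2 : ℝ) : ℂ) := by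
      rw [mul_comm, Complex.mul_conj]
      push_cast
      rw [hbdef, ← Complex.sq_norm]
      push_cast
      ring
    have e2 : |1 - b ^ 2| = 1 - b ^ 2 := abs_of_pos (by nlinarith)
    rw [e, Complex.norm_real, Real.norm_eq_abs, e2, htdef]
  -- geometry on the small ball
  have hmem : ∀ z ∈ ball w ρ, ‖z‖ < 1 := by
    intro z hz
    rw [mem_ball, Complex.dist_eq] at hz
    calc ‖z‖ ≤ ‖w‖ + ‖z - w‖ := by
          simpa using norm_add_le w (z - w)
      _ < b + ρ := by rw [hbdef]; linarith
      _ ≤ 1 := by rw [hρdef]; linarith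
  have hx : ∀ z ∈ ball w ρ, (1 - (starRingEnd ℂ) w * z) ≠ 0 ∧
      ‖1 - (starRingEnd ℂ) w * z‖ ≤ 3/2 * t := by
    intro z hz
    have hz' := hmem z hz
    have hzw : ‖z - w‖ < ρ := by
      rw [mem_ball, Complex.dist_eq] at hz; exact hz
    constructor
    · intro h
      have e1 : (starRingEnd ℂ) w * z = 1 := by linear_combination -h
      have e2 : ‖(starRingEnd ℂ) w * z‖ = 1 := by rw [e1]; simp
      rw [norm_mul, Complex.norm_conj, ← hbdef] at e2
      nlinarith [norm_nonneg z, mul_le_mul_of_nonneg_left hz'.le hb0]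
    · have key : (1 : ℂ) - (starRingEnd ℂ) w * z
          = (1 - (starRingEnd ℂ) w * w) + (starRingEnd ℂ) w * (w - z) := by ring
      calc ‖1 - (starRingEnd ℂ) w * z‖
          ≤ ‖1 - (starRingEnd ℂ) w * w‖
            + ‖(starRingEnd ℂ) w * (w - z)‖ := by
            rw [key]; exact norm_add_le _ _
        _ ≤ t + b * ρ := by
            rw [habs1, norm_mul, Complex.norm_conj, ← hbdef]
            have h1 : ‖w - z‖ ≤ ρ := by
              rw [← norm_neg, neg_sub]; linarith
            have := mul_le_mul_of_nonneg_left h1 hb0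
            linarith
        _ ≤ 3/2 * t := by nlinarith
  -- factorization of f
  have hfact : ∀ z ∈ ball w ρ,
      ‖α₀ * ((1 - (starRingEnd ℂ) w * z) ^ (-(γ : ℂ)))
        + α₁ * (z * (1 - (starRingEnd ℂ) w * z) ^ (-((γ : ℂ) + 1)))‖
      = ‖1 - (starRingEnd ℂ) w * z‖ ^ (-(γ + 1)) * ‖α₀ + β * z‖ := by
    intro z hz
    obtain ⟨hx0, -⟩ := hx z hz
    set x : ℂ := 1 - (starRingEnd ℂ) w * z with hxdef
    have hfz : α₀ * x ^ (-(γ : ℂ)) + α₁ * (z * x ^ (-((γ : ℂ) + 1)))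
        = x ^ (-((γ : ℂ) + 1)) * (α₀ + β * z) := by
      have e1 : x ^ (-(γ : ℂ)) = x ^ (-((γ : ℂ) + 1)) * x := by
        rw [show -(γ : ℂ) = (-((γ : ℂ) + 1)) + 1 by ring, Complex.cpow_add _ _ hx0,
          Complex.cpow_one]
      rw [e1, hβdef, hxdef]
      ring
    rw [hfz, norm_mul]
    congr 1
    rw [Complex.norm_cpow_of_ne_zero hx0]
    simp
  -- the good set
  set Bad : Set ℂ := {z | ‖α₀ + β * z‖ < m} with hBaddef
  set E : Set ℂ := ball w ρ \ Bad with hEdef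
  have hEmeas : MeasurableSet E := by
    apply measurableSet_ball.diff
    exact measurableSet_lt
      (continuous_norm.comp (by continuity)).measurable measurable_const
  have hEsub : E ⊆ ball (0 : ℂ) 1 := by
    intro z hz
    rw [mem_ball_zero_iff]
    exact hmem z hz.1
  have hgE : ∀ z ∈ E, q ≤ ‖α₀ * ((1 - (starRingEnd ℂ) w * z) ^ (-(γ : ℂ)))
        + α₁ * (z * (1 - (starRingEnd ℂ) w * z) ^ (-((γ : ℂ) + 1)))‖ := by
    intro z hz
    obtain ⟨hzball, hzbad⟩ := hz
    obtain ⟨hx0, hxle⟩ := hx z hzball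
    have hxpos : 0 < ‖1 - (starRingEnd ℂ) w * z‖ := norm_pos_iff.mpr hx0
    have hmle : m ≤ ‖α₀ + β * z‖ := not_lt.mp hzbad
    rw [hfact z hzball, hqdef, mul_comm m _]
    apply mul_le_mul _ hmle hm0 (Real.rpow_nonneg hxpos.le _)
    exact Real.rpow_le_rpow_of_nonpos hxpos hxle (by linarith)
  -- volume bound
  have hballvol : ∀ (ζ : ℂ) (r : ℝ), 0 ≤ r →
      volume (ball ζ r) = ENNReal.ofReal (r ^ 2 * Real.pi) := by
    intro ζ r hr
    rw [Complex.volume_ball, ENNReal.ofReal_mul (by positivity), ENNReal.ofReal_pow hr]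
    congr 1
    rw [← NNReal.coe_real_pi, ENNReal.ofReal_coe_nnreal]
  have hvol : ENNReal.ofReal (3/4 * (ρ ^ 2 * Real.pi)) ≤ volume E := by
    rcases lt_or_ge (‖u‖) (2 * (‖β‖ * ρ)) with hcase | hcase
    · -- Bad is contained in a small ball
      have hβ0 : β ≠ 0 := by
        intro h
        rw [h] at hcase
        simp only [norm_zero, zero_mul, mul_zero] at hcase
        linarith
      have hβpos : 0 < ‖β‖ := norm_pos_iff.mpr hβ0
      have hsub : Bad ⊆ ball (w - u / β) (ρ / 2) := by
        intro z hz
        rw [hBaddef, Set.mem_setOf_eq] at hz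
        have hfac : α₀ + β * z = β * (z - (w - u / β)) := by
          rw [hudef]; field_simp; ring
        rw [hfac, norm_mul] at hz
        rw [mem_ball, Complex.dist_eq]
        have hmlt : m < ‖β‖ * ρ / 2 := by
          rw [hmdef]; linarith
        nlinarith [norm_nonneg (z - (w - u / β))]
      calc ENNReal.ofReal (3/4 * (ρ ^ 2 * Real.pi))
          = ENNReal.ofReal (ρ ^ 2 * Real.pi) - ENNReal.ofReal ((ρ/2) ^ 2 * Real.pi) := by
            rw [← ENNReal.ofReal_sub _ (by positivity)]
            congr 1
            ring
        _ ≤ volume (ball w ρ) - volume Bad := by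
            rw [hballvol w ρ hρ.le]
            refine tsub_le_tsub le_rfl ?_
            calc volume Bad ≤ volume (ball (w - u / β) (ρ / 2)) := measure_mono hsub
              _ = ENNReal.ofReal ((ρ/2) ^ 2 * Real.pi) :=
                  hballvol _ _ (by linarith)
        _ ≤ volume E := by rw [hEdef]; exact le_measure_diff
    · -- Bad misses the ball
      have hsub : ball w ρ ⊆ E := by
        intro z hz
        refine ⟨hz, fun hbad => ?_⟩
        rw [hBaddef, Set.mem_setOf_eq] at hbad
        have hzw : ‖z - w‖ < ρ := by
          rw [mem_ball, Complex.dist_eq] at hz; exact hz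
        have htri : ‖u‖ ≤ ‖α₀ + β * z‖
            + ‖β‖ * ‖z - w‖ := by
          have e2 : u = (α₀ + β * z) + -(β * (z - w)) := by rw [hudef]; ring
          calc ‖u‖ = ‖(α₀ + β * z) + -(β * (z - w))‖ := by rw [← e2]
            _ ≤ ‖α₀ + β * z‖ + ‖-(β * (z - w))‖ :=
                norm_add_le _ _
            _ = ‖α₀ + β * z‖ + ‖β‖ * ‖z - w‖ := by
                rw [norm_neg, norm_mul]
        rw [hmdef] at hbad
        nlinarith [mul_le_mul_of_nonneg_left hzw.le hβnn]
      calc ENNReal.ofReal (3/4 * (ρ ^ 2 * Real.pi))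
          ≤ ENNReal.ofReal (ρ ^ 2 * Real.pi) :=
            ENNReal.ofReal_le_ofReal (by nlinarith [Real.pi_pos, sq_nonneg ρ])
        _ = volume (ball w ρ) := (hballvol w ρ hρ.le).symm
        _ ≤ volume E := measure_mono hsub
  -- the key real inequality
  have hreal : c * R ≤ q * (3/4 * ρ ^ 2) ^ (1/p) := by
    have hR' : R = t ^ (-(γ + 1 - 2/p)) * S := by
      rw [hRdef, hSdef, show -(γ - 2/p) = -(γ + 1 - 2/p) + 1 by ring, Real.rpow_add ht,
        Real.rpow_one]
      ring
    have hSm : S ≤ 48 * m := by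
      have h1 : ‖α₀‖ ≤ ‖u‖ + ‖β‖ * b := by
        have e : α₀ = u + -(β * w) := by rw [hudef]; ring
        calc ‖α₀‖ = ‖u + -(β * w)‖ := by rw [← e]
          _ ≤ ‖u‖ + ‖-(β * w)‖ := norm_add_le _ _
          _ = ‖u‖ + ‖β‖ * b := by
              rw [norm_neg, norm_mul, hbdef]
      have h2 : ‖α₁‖ ≤ ‖β‖ * t + ‖u‖ * b := by
        have e : α₁ = β * (1 - (starRingEnd ℂ) w * w) + u * (starRingEnd ℂ) w := by
          rw [hudef, hβdef]; ring
        calc ‖α₁‖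
            = ‖β * (1 - (starRingEnd ℂ) w * w) + u * (starRingEnd ℂ) w‖ := by
              rw [← e]
          _ ≤ ‖β * (1 - (starRingEnd ℂ) w * w)‖
              + ‖u * (starRingEnd ℂ) w‖ := norm_add_le _ _
          _ = ‖β‖ * t + ‖u‖ * b := by
              rw [norm_mul, norm_mul, habs1, Complex.norm_conj, hbdef]
      have e1 : ‖α₀‖ * t ≤ ‖u‖ + ‖β‖ * t := by
        nlinarith [mul_le_mul_of_nonneg_right h1 ht.le,
          mul_nonneg (sub_nonneg.mpr ht1) hu0,
          mul_nonneg (mul_nonneg (sub_nonneg.mpr hb1.le) hβnn) ht.le]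
      have h2' : ‖α₁‖ ≤ ‖β‖ * t + ‖u‖ := by
        nlinarith [mul_nonneg (sub_nonneg.mpr hb1.le) hu0]
      have e2 : ‖β‖ * t ≤ 4 * (‖β‖ * ρ) := by
        nlinarith [mul_le_mul_of_nonneg_left (by linarith : t ≤ 4 * ρ) hβnn]
      rw [hSdef, hmdef]
      linarith
    have hmul : ((3:ℝ)/2 * t) ^ (-(γ + 1)) = (3/2:ℝ) ^ (-(γ + 1)) * t ^ (-(γ + 1)) :=
      Real.mul_rpow (by norm_num) ht.le
    have hXeq : ((3/64:ℝ) * t ^ 2) ^ (1/p) = (3/64:ℝ) ^ (1/p) * t ^ (2/p) := by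
      rw [Real.mul_rpow (by norm_num) (by positivity), ← Real.rpow_natCast t 2,
        ← Real.rpow_mul ht.le]
      push_cast
      rw [mul_one_div]
    have hXle : (3/64:ℝ) ^ (1/p) * t ^ (2/p) ≤ (3/4 * ρ ^ 2) ^ (1/p) := by
      rw [← hXeq]
      apply Real.rpow_le_rpow (by positivity) _ hip
      have h4 : t/4 * (t/4) ≤ ρ * ρ := mul_le_mul hρt hρt (by linarith) (by linarith)
      nlinarith
    have hpos1 : (0:ℝ) ≤ (3/2:ℝ) ^ (-(γ + 1)) * t ^ (-(γ + 1)) :=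
      mul_nonneg (Real.rpow_nonneg (by norm_num) _) (Real.rpow_nonneg ht.le _)
    have hpos2 : (0:ℝ) ≤ (3/64:ℝ) ^ (1/p) * t ^ (2/p) :=
      mul_nonneg (Real.rpow_nonneg (by norm_num) _) (Real.rpow_nonneg ht.le _)
    calc c * R
        = (S/48) * ((3/2:ℝ) ^ (-(γ + 1)) * t ^ (-(γ + 1)))
            * ((3/64:ℝ) ^ (1/p) * t ^ (2/p)) := by
          rw [hR', hc, Real.rpow_neg (by norm_num : (0:ℝ) ≤ 3/2),
            show -(γ + 1 - 2/p) = -(γ + 1) + 2/p by ring, Real.rpow_add ht]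
          field_simp
      _ ≤ (m * ((3/2:ℝ) ^ (-(γ + 1)) * t ^ (-(γ + 1))))
            * ((3/64:ℝ) ^ (1/p) * t ^ (2/p)) := by
          have hsm : S / 48 ≤ m := by linarith
          apply mul_le_mul_of_nonneg_right _ hpos2
          exact mul_le_mul_of_nonneg_right hsm hpos1
      _ ≤ q * (3/4 * ρ ^ 2) ^ (1/p) := by
          rw [hqdef, hmul]
          exact mul_le_mul_of_nonneg_left hXle (mul_nonneg hm0 hpos1)
  have hrealp : (c * R) ^ p ≤ q ^ p * (3/4 * ρ ^ 2) := by
    have h1 := Real.rpow_le_rpow hcR0 hreal hp.le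
    rwa [Real.mul_rpow hq0 (Real.rpow_nonneg (by positivity) _),
      ← Real.rpow_mul (by positivity), one_div_mul_cancel hp.ne', Real.rpow_one] at h1
  -- assemble the lintegral bound
  rw [Bnorm]
  have key : ENNReal.ofReal ((c * R) ^ p)
      ≤ ∫⁻ z, (‖α₀ * ((1 - (starRingEnd ℂ) w * z) ^ (-(γ : ℂ)))
          + α₁ * (z * (1 - (starRingEnd ℂ) w * z) ^ (-((γ : ℂ) + 1)))‖₊ : ℝ≥0∞) ^ p ∂dA := by
    have hπ0 : (ENNReal.ofReal Real.pi) ≠ 0 := by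
      simp [ENNReal.ofReal_eq_zero, Real.pi_pos, not_le]
    have hπtop : (ENNReal.ofReal Real.pi) ≠ ⊤ := ENNReal.ofReal_ne_top
    calc ENNReal.ofReal ((c * R) ^ p)
        ≤ ENNReal.ofReal (q ^ p * (3/4 * ρ ^ 2)) := ENNReal.ofReal_le_ofReal hrealp
      _ = ENNReal.ofReal (q ^ p) * ENNReal.ofReal (3/4 * ρ ^ 2) :=
          ENNReal.ofReal_mul (Real.rpow_nonneg hq0 p)
      _ ≤ ENNReal.ofReal (q ^ p) * ((ENNReal.ofReal Real.pi)⁻¹ * volume E) := by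
          apply mul_le_mul_right
          rw [← ENNReal.div_eq_inv_mul]
          rw [ENNReal.le_div_iff_mul_le (Or.inl hπ0) (Or.inl hπtop)]
          rw [← ENNReal.ofReal_mul (by positivity)]
          calc ENNReal.ofReal (3/4 * ρ ^ 2 * Real.pi)
              = ENNReal.ofReal (3/4 * (ρ ^ 2 * Real.pi)) := by congr 1; ring
            _ ≤ volume E := hvol
      _ = ∫⁻ z, E.indicator (fun _ => ENNReal.ofReal (q ^ p)) z ∂dA := by
          rw [dA, lintegral_smul_measure, lintegral_indicator hEmeas, setLIntegral_const,
            Measure.restrict_apply hEmeas, Set.inter_eq_self_of_subset_left hEsub]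
          ring
      _ ≤ _ := by
          apply lintegral_mono
          intro z
          classical
          rw [Set.indicator_apply]
          split_ifs with hz
          · have h1 : ENNReal.ofReal q ≤ (‖α₀ * ((1 - (starRingEnd ℂ) w * z) ^ (-(γ : ℂ)))
                + α₁ * (z * (1 - (starRingEnd ℂ) w * z) ^ (-((γ : ℂ) + 1)))‖₊ : ℝ≥0∞) := by
              rw [← ENNReal.ofReal_coe_nnreal, coe_nnnorm]
              exact ENNReal.ofReal_le_ofReal
                (by exact hgE z hz)
            calc ENNReal.ofReal (q ^ p) = ENNReal.ofReal q ^ p :=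
                (ENNReal.ofReal_rpow_of_nonneg hq0 hp.le).symm
              _ ≤ _ := ENNReal.rpow_le_rpow h1 hp.le
          · exact bot_le
  calc ENNReal.ofReal (c * R)
      = (ENNReal.ofReal ((c * R) ^ p)) ^ (1/p) := by
        rw [ENNReal.ofReal_rpow_of_nonneg (Real.rpow_nonneg hcR0 p) hip,
          ← Real.rpow_mul hcR0, mul_one_div_cancel hp.ne', Real.rpow_one]
    _ ≤ _ := ENNReal.rpow_le_rpow key hip
end

section
/- For $w \in \mathbb{D}$, $\beta > 0$, an integer $n \ge 0$, and $f$ holomorphic on $\mathbb{D}$, define $F_w(z) = f(z)(1-\bar{w}z)^{-(\beta+n)}$. Then $(1-|w|^2)^{n+1}\left(F_w^{(n+1)}(w) - \frac{f^{(n+1)}(w)}{(1-|w|^2)^{\beta+n}}\right) + \sum_{i=0}^{n} (-1)^{i+1} \binom{n+1}{i+1} \Gamma_\beta^{n-i,n} \, \bar{w}^{\,i+1} F_w^{(n-i)}(w) (1-|w|^2)^{n-i} = 0$. -/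
open MeasureTheory Metric Complex Finset

lemma aux_deriv_diff {s : Set ℂ} (hs : IsOpen s) {g : ℂ → ℂ}
    (hg : DifferentiableOn ℂ g s) : DifferentiableOn ℂ (deriv g) s :=
  ((hg.analyticOnNhd hs).deriv_of_isOpen hs).differentiableOn

lemma aux_iter_diff {s : Set ℂ} (hs : IsOpen s) {g : ℂ → ℂ}
    (hg : DifferentiableOn ℂ g s) (k : ℕ) : DifferentiableOn ℂ (iteratedDeriv k g) s := by
  induction k with
  | zero => simpa using hg
  | succ k ih => rw [iteratedDeriv_succ]; exact aux_deriv_diff hs ih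

/-- Leibniz rule for iterated derivatives of holomorphic functions on an open set. -/
lemma aux_leibniz {s : Set ℂ} (hs : IsOpen s) {u v : ℂ → ℂ}
    (hu : DifferentiableOn ℂ u s) (hv : DifferentiableOn ℂ v s) (m : ℕ) :
    ∀ z ∈ s, iteratedDeriv m (fun z => u z * v z) z
      = ∑ k ∈ Finset.range (m + 1),
          ((m.choose k : ℂ)) * iteratedDeriv k u z * iteratedDeriv (m - k) v z := by
  induction m with
  | zero => intro z hz; simp
  | succ m ih =>
    intro z hz
    have hev : iteratedDeriv m (fun z => u z * v z)
        =ᶠ[nhds z] fun z => ∑ k ∈ Finset.range (m + 1),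
          ((m.choose k : ℂ)) * iteratedDeriv k u z * iteratedDeriv (m - k) v z :=
      Filter.eventually_of_mem (hs.mem_nhds hz) ih
    have hder : ∀ k : ℕ, HasDerivAt (fun z => ((m.choose k : ℂ)) * iteratedDeriv k u z
          * iteratedDeriv (m - k) v z)
        (((m.choose k : ℂ)) * (iteratedDeriv (k+1) u z * iteratedDeriv (m - k) v z
          + iteratedDeriv k u z * iteratedDeriv (m - k + 1) v z)) z := by
      intro k
      have hu' : HasDerivAt (iteratedDeriv k u) (iteratedDeriv (k+1) u z) z := by
        rw [iteratedDeriv_succ]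
        exact (((aux_iter_diff hs hu k) z hz).differentiableAt (hs.mem_nhds hz)).hasDerivAt
      have hv' : HasDerivAt (iteratedDeriv (m-k) v) (iteratedDeriv (m-k+1) v z) z := by
        rw [iteratedDeriv_succ]
        exact (((aux_iter_diff hs hv (m-k)) z hz).differentiableAt (hs.mem_nhds hz)).hasDerivAt
      simpa [mul_assoc, mul_add] using ((hu'.mul hv').const_mul ((m.choose k : ℂ)))
    have hsum : HasDerivAt (fun z => ∑ k ∈ Finset.range (m + 1),
          ((m.choose k : ℂ)) * iteratedDeriv k u z * iteratedDeriv (m - k) v z)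
        (∑ k ∈ Finset.range (m + 1), ((m.choose k : ℂ)) *
          (iteratedDeriv (k+1) u z * iteratedDeriv (m - k) v z
            + iteratedDeriv k u z * iteratedDeriv (m - k + 1) v z)) z :=
      HasDerivAt.fun_sum fun k _ => hder k
    rw [iteratedDeriv_succ, hev.deriv_eq, hsum.deriv]
    have key := Finset.sum_choose_succ_mul
      (fun i j => iteratedDeriv i u z * iteratedDeriv j v z) m
    rw [show (∑ k ∈ Finset.range (m + 1 + 1), (((m+1).choose k : ℂ))
          * iteratedDeriv k u z * iteratedDeriv (m + 1 - k) v z)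
        = ∑ k ∈ Finset.range (m + 2), (((m+1).choose k : ℂ))
          * (iteratedDeriv k u z * iteratedDeriv (m + 1 - k) v z) from
      Finset.sum_congr rfl fun k _ => mul_assoc _ _ _, key, ← Finset.sum_add_distrib]
    refine Finset.sum_congr rfl fun k hk => ?_
    have hk' : k ≤ m := Nat.lt_succ_iff.mp (Finset.mem_range.mp hk)
    rw [show m - k + 1 = m + 1 - k from by omega]
    ring


lemma aux_slit {x : ℂ} (hx : ‖x‖ < 1) : (1 - x) ∈ Complex.slitPlane := by
  left
  have : x.re ≤ ‖x‖ := Complex.re_le_norm x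
  simp only [Complex.sub_re, Complex.one_re]
  linarith

lemma aux_ball_abs {w z : ℂ} (hw : ‖w‖ < 1) (hz : z ∈ ball (0:ℂ) 1) :
    ‖(starRingEnd ℂ) w * z‖ < 1 := by
  have hz' : ‖z‖ < 1 := by simpa [Complex.dist_eq] using hz
  have := norm_nonneg w
  have := norm_nonneg z
  calc ‖(starRingEnd ℂ) w * z‖ = ‖w‖ * ‖z‖ := by
        simp [map_mul]
    _ < 1 := by nlinarith

lemma aux_iter_cpow {w : ℂ} (hw : ‖w‖ < 1) (b : ℂ) (k : ℕ) :
    ∀ z ∈ ball (0:ℂ) 1, iteratedDeriv k (fun z => (1 - (starRingEnd ℂ) w * z) ^ b) z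
      = (-((starRingEnd ℂ) w))^k * (∏ j ∈ Finset.range k, (b - (j:ℂ)))
        * (1 - (starRingEnd ℂ) w * z) ^ (b - (k:ℂ)) := by
  set c := (starRingEnd ℂ) w with hc
  induction k with
  | zero => intro z hz; simp
  | succ k ih =>
    intro z hz
    have hev : iteratedDeriv k (fun z => (1 - c * z) ^ b)
        =ᶠ[nhds z] fun z => (-c)^k * (∏ j ∈ Finset.range k, (b - (j:ℂ)))
          * (1 - c * z) ^ (b - (k:ℂ)) :=
      Filter.eventually_of_mem (isOpen_ball.mem_nhds hz) ih
    have hslit : (1 - c * z) ∈ Complex.slitPlane := aux_slit (aux_ball_abs hw hz)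
    have hin : HasDerivAt (fun z => 1 - c * z) (-(c * 1)) z :=
      ((hasDerivAt_id z).const_mul c).const_sub 1
    have hpow : HasDerivAt (fun z => (1 - c * z) ^ (b - (k:ℂ)))
        ((b - (k:ℂ)) * (1 - c * z) ^ (b - (k:ℂ) - 1) * (-(c * 1))) z :=
      hin.cpow_const hslit
    have hD : HasDerivAt (fun z => (-c)^k * (∏ j ∈ Finset.range k, (b - (j:ℂ)))
          * (1 - c * z) ^ (b - (k:ℂ)))
        ((-c)^k * (∏ j ∈ Finset.range k, (b - (j:ℂ)))
          * ((b - (k:ℂ)) * (1 - c * z) ^ (b - (k:ℂ) - 1) * (-(c * 1)))) z :=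
      hpow.const_mul _
    rw [iteratedDeriv_succ, hev.deriv_eq, hD.deriv]
    rw [show b - (k:ℂ) - 1 = b - ((k+1 : ℕ):ℂ) from by push_cast; ring,
      Finset.prod_range_succ]
    ring
theorem stmt5 (β : ℝ) (hβ : 0 < β) (n : ℕ) (f : ℂ → ℂ)
    (hf : DifferentiableOn ℂ f (ball (0 : ℂ) 1)) (w : ℂ) (hw : w ∈ ball (0 : ℂ) 1)
    (F : ℂ → ℂ)
    (hF : F = fun z => f z * (1 - (starRingEnd ℂ) w * z) ^ (-((β : ℂ) + (n : ℂ)))) :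
    (((1 - ‖w‖ ^ 2) ^ (n + 1) : ℝ) : ℂ) *
        (iteratedDeriv (n + 1) F w
          - iteratedDeriv (n + 1) f w / (((1 - ‖w‖ ^ 2) ^ (β + (n : ℝ)) : ℝ) : ℂ))
      + ∑ i ∈ Finset.range (n + 1),
          (-1 : ℂ) ^ (i + 1) * ((n + 1).choose (i + 1) : ℂ) * ((Gam β (n - i) n : ℝ) : ℂ)
            * ((starRingEnd ℂ) w) ^ (i + 1) * iteratedDeriv (n - i) F w
            * (((1 - ‖w‖ ^ 2) ^ (n - i) : ℝ) : ℂ) = 0 := by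
  set c := (starRingEnd ℂ) w with hc
  set a : ℂ := (β : ℂ) + (n : ℂ) with ha
  have hw1 : ‖w‖ < 1 := by simpa [Complex.dist_eq] using hw
  set A : ℝ := 1 - ‖w‖ ^ 2 with hA
  have hA0 : 0 < A := by
    have h1 := norm_nonneg w
    rw [hA]; nlinarith
  set T : ℂ := (A : ℂ) with hT
  have hTne : T ≠ 0 := by
    simp only [hT, ne_eq, Complex.ofReal_eq_zero]
    exact ne_of_gt hA0
  have hcw : 1 - c * w = T := by
    rw [hT, hc, hA]
    have h2 : (starRingEnd ℂ) w * w = ((‖w‖ ^ 2 : ℝ) : ℂ) := by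
      rw [mul_comm, Complex.mul_conj, Complex.normSq_eq_norm_sq]
    rw [h2]; push_cast; ring
  set h : ℂ → ℂ := fun z => (1 - c * z) ^ a with hh
  have hslit : ∀ z ∈ ball (0:ℂ) 1, (1 - c * z) ∈ Complex.slitPlane :=
    fun z hz => aux_slit (aux_ball_abs hw1 hz)
  have hne : ∀ z ∈ ball (0:ℂ) 1, (1 - c * z) ≠ 0 :=
    fun z hz => Complex.slitPlane_ne_zero (hslit z hz)
  have hcpowdiff : ∀ b : ℂ, DifferentiableOn ℂ (fun z => (1 - c * z) ^ b) (ball (0:ℂ) 1) := by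
    intro b z hz
    have hin : HasDerivAt (fun z => 1 - c * z) (-(c * 1)) z :=
      ((hasDerivAt_id z).const_mul c).const_sub 1
    exact ((hin.cpow_const (hslit z hz)).differentiableAt).differentiableWithinAt
  have hhdiff : DifferentiableOn ℂ h (ball (0:ℂ) 1) := hcpowdiff a
  have hFdiff : DifferentiableOn ℂ F (ball (0:ℂ) 1) := by
    rw [hF]; exact hf.mul (hcpowdiff (-a))
  have heq : ∀ z ∈ ball (0:ℂ) 1, f z = h z * F z := by
    intro z hz
    have h1 : (1 - c * z) ^ a * (1 - c * z) ^ (-a) = 1 := by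
      rw [← Complex.cpow_add _ _ (hne z hz)]; simp
    calc f z = f z * ((1 - c * z) ^ a * (1 - c * z) ^ (-a)) := by rw [h1, mul_one]
      _ = h z * F z := by simp only [hF, hh]; ring
  have hf1 : iteratedDeriv (n+1) f w = iteratedDeriv (n+1) (fun z => h z * F z) w :=
    Filter.EventuallyEq.iteratedDeriv_eq (n+1)
      (Filter.eventually_of_mem (isOpen_ball.mem_nhds hw) heq)
  have hleib := aux_leibniz isOpen_ball hhdiff hFdiff (n+1) w hw
  set P : ℕ → ℂ := fun k => ∏ j ∈ Finset.range k, (a - (j:ℂ)) with hP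
  set Ar : ℂ := ((A ^ (β + (n : ℝ)) : ℝ) : ℂ) with hAr
  have hArne : Ar ≠ 0 := by
    simp only [hAr, ne_eq, Complex.ofReal_eq_zero]
    exact ne_of_gt (Real.rpow_pos_of_pos hA0 _)
  have hTa : T ^ a = Ar := by
    rw [hAr, Complex.ofReal_cpow hA0.le, hT]
    congr 1
    push_cast; ring
  have hval : ∀ k : ℕ, iteratedDeriv k h w = (-c)^k * P k * Ar / T^k := by
    intro k
    rw [hh]
    rw [aux_iter_cpow hw1 a k w hw, hcw, Complex.cpow_sub _ _ hTne, hTa,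
      Complex.cpow_natCast, mul_div_assoc]
  have hf2 : iteratedDeriv (n+1) f w / Ar
      = ∑ k ∈ Finset.range (n+2),
          (((n+1).choose k : ℂ)) * ((-c)^k * P k / T^k) * iteratedDeriv (n+1-k) F w := by
    rw [hf1, hleib, Finset.sum_div]
    refine Finset.sum_congr rfl fun k _ => ?_
    rw [hval k]
    field_simp
  have hGam : ∀ i : ℕ, i ≤ n → ((Gam β (n - i) n : ℝ) : ℂ) = P (i+1) := by
    intro i hin
    have himg : Finset.Icc (n-i) n = (Finset.range (i+1)).image (fun j => n - j) := by
      ext m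
      simp only [Finset.mem_Icc, Finset.mem_image, Finset.mem_range]
      constructor
      · intro hm; exact ⟨n - m, by omega, by omega⟩
      · rintro ⟨j, hj, rfl⟩; omega
    have hinj : ∀ x ∈ Finset.range (i+1), ∀ y ∈ Finset.range (i+1),
        n - x = n - y → x = y := by
      intro x hx y hy
      simp only [Finset.mem_range] at hx hy
      omega
    rw [Gam, Complex.ofReal_prod, himg, Finset.prod_image hinj]
    simp only [hP]
    refine Finset.prod_congr rfl fun j hj => ?_
    have hjn : j ≤ n := le_trans (Nat.lt_succ_iff.mp (Finset.mem_range.mp hj)) hin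
    push_cast [Nat.cast_sub hjn]
    rw [ha]
    ring
  have hofA : ∀ k : ℕ, ((A ^ k : ℝ) : ℂ) = T ^ k := by
    intro k; rw [hT]; push_cast; ring
  rw [hofA (n+1), hf2, Finset.sum_range_succ']
  have hP0 : P 0 = 1 := by simp [hP]
  simp only [Nat.choose_zero_right, Nat.cast_one, pow_zero, hP0, Nat.sub_zero, one_mul,
    mul_one, div_one]
  have hkey : ∀ x y s : ℂ, x * (y - (s + y)) = -(x * s) := by intro x y s; ring
  rw [hkey, Finset.mul_sum, ← Finset.sum_neg_distrib, ← Finset.sum_add_distrib]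
  refine Finset.sum_eq_zero fun i hi => ?_
  have hin : i ≤ n := Nat.lt_succ_iff.mp (Finset.mem_range.mp hi)
  rw [hGam i hin, hofA (n-i), show n + 1 - (i + 1) = n - i by omega,
    show T^(n+1) = T^(i+1) * T^(n-i) by rw [← pow_add]; congr 1; omega]
  field_simp
  ring
end

section
/- Let $0 < p \le q < \infty$ with $2/p - 2/q \le 1$, let $\mu$ be a positive Borel measure on $\mathbb{D}$, and let $u_0, u_1$ be holomorphic on $\mathbb{D}$. Suppose there is $C > 0$ such that $\int_{\mathbb{D}} |u_0(z) f(z) + u_1(z) f'(z)|^q \, d\mu(z) \le C \|f\|_p^q$ for all $f \in A^p$. Then $\sup_{w \in \mathbb{D}} (1-|w|^2)^{-(1 + 2/p)q} \int_{D(w,r)} |u_1(z)|^q \, d\mu(z) < \infty$ for every $r > 0$, where $D(w,r)$ is the Bergman metric disc of center $w$ and radius $r$; i.e., $|u_1|^q d\mu$ is a $(1,p,q)$-Carleson measure. -/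
open MeasureTheory Metric Complex Finset
open scoped ENNReal NNReal

/-- The pseudo-hyperbolic metric `ρ(z,w) = |(z-w)/(1-\bar w z)|`. -/
noncomputable def prho (z w : ℂ) : ℝ := ‖(z - w) / (1 - (starRingEnd ℂ) w * z)‖

/-- The Bergman metric `β(z,w)`. -/
noncomputable def bmetric (z w : ℂ) : ℝ :=
  (1 / 2) * Real.log ((1 + prho z w) / (1 - prho z w))

/-- The Bergman metric disc `D(w,r)`. -/
def bball (w : ℂ) (r : ℝ) : Set ℂ := {z | z ∈ ball (0 : ℂ) 1 ∧ bmetric z w < r}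

/-! ### Auxiliary lemmas -/

lemma ofReal_norm_eq_coe_nnnorm' {E : Type*} [SeminormedAddCommGroup E] (a : E) :
    ENNReal.ofReal ‖a‖ = (‖a‖₊ : ℝ≥0∞) := ofReal_norm a

section Aux
lemma FR (c : ℝ) (hc : 2 < c) : ∃ K : ℝ≥0∞, K ≠ ⊤ ∧ ∀ w : ℂ, ‖w‖ < 1 →
    ∫⁻ z in ball (0:ℂ) 1,
        ENNReal.ofReal (‖1 - (starRingEnd ℂ) w * z‖ ^ (-c)) ∂(volume : Measure ℂ)
      ≤ K * ENNReal.ofReal ((1 - ‖w‖ ^ 2) ^ (2 - c)) := by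
  have h2c : (2:ℝ) - c < 0 := by linarith
  set r₀ : ℝ≥0∞ := ENNReal.ofReal ((2:ℝ) ^ ((2:ℝ) - c)) with hr₀
  have hr₀lt : r₀ < 1 := by
    rw [hr₀, ← ENNReal.ofReal_one]
    exact ENNReal.ofReal_lt_ofReal_iff_of_nonneg (by positivity) |>.mpr
      (by simpa using Real.rpow_lt_one_of_one_lt_of_neg (by norm_num : (1:ℝ) < 2) h2c)
  refine ⟨ENNReal.ofReal ((2:ℝ) ^ c * Real.pi)
      + (NNReal.pi : ℝ≥0∞) * ENNReal.ofReal (16 * (2:ℝ) ^ (c - 2)) * (1 - r₀)⁻¹, ?_, ?_⟩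
  · refine ENNReal.add_ne_top.mpr ⟨ENNReal.ofReal_ne_top, ?_⟩
    refine ENNReal.mul_ne_top (ENNReal.mul_ne_top ENNReal.coe_ne_top ENNReal.ofReal_ne_top) ?_
    simp [ENNReal.inv_ne_top, tsub_eq_zero_iff_le, not_le, hr₀lt]
  intro w hw
  set a : ℂ := (starRingEnd ℂ) w with ha
  have haw : ‖a‖ = ‖w‖ := by simp [ha]
  set s : ℝ := 1 - ‖w‖ ^ 2 with hsdef
  have hs : 0 < s := by
    have := norm_nonneg w
    nlinarith [hw]
  have hs1 : s ≤ 1 := by nlinarith [norm_nonneg w]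
  have hsrp : (1:ℝ) ≤ s ^ ((2:ℝ) - c) :=
    Real.one_le_rpow_of_pos_of_le_one_of_nonpos hs hs1 h2c.le
  -- lower bound for |1 - a z| on the ball
  have hlow : ∀ z ∈ ball (0:ℂ) 1, 1 - ‖w‖ ≤ ‖1 - a * z‖ := by
    intro z hz
    have hz1 : ‖z‖ < 1 := by simpa [Complex.dist_eq] using hz
    have h1 : ‖(1:ℂ)‖ - ‖a*z‖ ≤ ‖1 - a*z‖ := by
      simpa using norm_sub_norm_le (1:ℂ) (a*z)
    have h2 : ‖a*z‖ ≤ ‖w‖ := by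
      rw [norm_mul, haw]
      nlinarith [norm_nonneg w, norm_nonneg z, hz1.le]
    simp only [norm_one] at h1
    linarith
  by_cases hw2 : ‖w‖ ≤ 1/2
  · -- easy case
    have hbd : ∀ z ∈ ball (0:ℂ) 1,
        ENNReal.ofReal (‖1 - a * z‖ ^ (-c)) ≤ ENNReal.ofReal ((2:ℝ) ^ c) := by
      intro z hz
      refine ENNReal.ofReal_le_ofReal ?_
      have h12 : (1:ℝ)/2 ≤ ‖1 - a*z‖ := by
        have := hlow z hz; linarith
      calc ‖1 - a*z‖ ^ (-c) ≤ ((1:ℝ)/2) ^ (-c) :=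
            Real.rpow_le_rpow_of_nonpos (by norm_num) h12 (by linarith)
        _ = (2:ℝ) ^ c := by
            rw [one_div, ← Real.rpow_neg_one 2, ← Real.rpow_mul (by norm_num)]
            norm_num
    calc ∫⁻ z in ball (0:ℂ) 1, ENNReal.ofReal (‖1 - a * z‖ ^ (-c)) ∂volume
        ≤ ∫⁻ _ in ball (0:ℂ) 1, ENNReal.ofReal ((2:ℝ) ^ c) ∂volume :=
          setLIntegral_mono measurable_const hbd
      _ = ENNReal.ofReal ((2:ℝ) ^ c) * volume (ball (0:ℂ) 1) := setLIntegral_const _ _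
      _ ≤ ENNReal.ofReal ((2:ℝ) ^ c) * ENNReal.ofReal Real.pi := by
          gcongr
          rw [Complex.volume_ball]
          simp [Real.pi_nonneg, ← ENNReal.ofReal_coe_nnreal]
      _ = ENNReal.ofReal ((2:ℝ) ^ c * Real.pi) := by
          rw [ENNReal.ofReal_mul (by positivity)]
      _ ≤ (ENNReal.ofReal ((2:ℝ) ^ c * Real.pi)
            + (NNReal.pi : ℝ≥0∞) * ENNReal.ofReal (16 * (2:ℝ) ^ (c - 2)) * (1 - r₀)⁻¹)
            * ENNReal.ofReal (s ^ ((2:ℝ) - c)) := by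
          nth_rewrite 1 [← mul_one (ENNReal.ofReal ((2:ℝ) ^ c * Real.pi))]
          gcongr
          · exact le_self_add
          · rw [← ENNReal.ofReal_one]; exact ENNReal.ofReal_le_ofReal hsrp
  · -- hard case : 1/2 < |w|
    push_neg at hw2
    have haw2 : 1/2 < ‖a‖ := by rwa [haw]
    have ha0 : a ≠ 0 := by
      intro h
      rw [h] at haw2; simp at haw2; linarith
    set s₀ : ℝ := s / 2 with hs₀def
    have hs₀ : 0 < s₀ := by positivity
    have hlow' : ∀ z ∈ ball (0:ℂ) 1, s₀ ≤ ‖1 - a * z‖ := by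
      intro z hz
      have h1 := hlow z hz
      have h2 : s₀ ≤ 1 - ‖w‖ := by
        rw [hs₀def, hsdef]; nlinarith [norm_nonneg w, hw.le]
      linarith
    set S : ℕ → Set ℂ := fun k => {z : ℂ | z ∈ ball (0:ℂ) 1 ∧
      (2:ℝ)^k * s₀ ≤ ‖1 - a*z‖ ∧ ‖1 - a*z‖ < 2^(k+1) * s₀} with hS
    have hcover : ball (0:ℂ) 1 ⊆ ⋃ k, S k := by
      intro z hz
      have ht : s₀ ≤ ‖1 - a*z‖ := hlow' z hz
      set t := ‖1 - a*z‖ with htdef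
      have ht0 : 0 < t := lt_of_lt_of_le hs₀ ht
      have hx1 : (1:ℝ) ≤ t / s₀ := (one_le_div hs₀).mpr ht
      set m := ⌊t / s₀⌋₊ with hm
      have hm1 : 1 ≤ m := Nat.le_floor (by exact_mod_cast hx1)
      set k := Nat.log 2 m with hk
      refine Set.mem_iUnion.mpr ⟨k, hz, ?_, ?_⟩
      · have h1 : ((2:ℝ))^k ≤ (m:ℝ) := by exact_mod_cast Nat.pow_log_le_self 2 (by omega)
        have h2 : (m:ℝ) ≤ t / s₀ := Nat.floor_le (by positivity)
        rw [← le_div_iff₀ hs₀]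
        linarith
      · have h3 : t / s₀ < (m:ℝ) + 1 := Nat.lt_floor_add_one _
        have h4 : (m:ℝ) + 1 ≤ (2:ℝ)^(k+1) := by
          have := Nat.lt_pow_succ_log_self (by norm_num : 1 < 2) m
          exact_mod_cast Nat.succ_le_of_lt this
        rw [← div_lt_iff₀ hs₀]
        linarith
    have hSsub : ∀ k, S k ⊆ ball (a⁻¹) ((2:ℝ)^(k+2) * s₀) := by
      intro k z hzS
      obtain ⟨hz, h1, h2⟩ := hzS
      rw [mem_ball, Complex.dist_eq]
      have key : ‖a‖ * ‖z - a⁻¹‖ = ‖1 - a*z‖ := by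
        rw [← norm_mul]
        have e : a * (z - a⁻¹) = -(1 - a*z) := by
          field_simp
          ring
        rw [e, norm_neg]
      have haa : (0:ℝ) < ‖a‖ := by linarith
      have habs0 : (0:ℝ) < ‖1 - a*z‖ := lt_of_lt_of_le (by positivity) h1
      have h5 : ‖z - a⁻¹‖ = ‖1 - a*z‖ / ‖a‖ := by
        rw [← key, mul_div_cancel_left₀ _ haa.ne']
      rw [h5]
      have h6 : ‖1 - a*z‖ / ‖a‖ < 2 * ‖1 - a*z‖ := by
        rw [div_lt_iff₀ haa]
        nlinarith [habs0, haw2]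
      have h7 : (2:ℝ) * ((2:ℝ)^(k+1) * s₀) = (2:ℝ)^(k+2) * s₀ := by ring
      nlinarith
    have hvol : ∀ k, volume (S k) ≤ ENNReal.ofReal (((2:ℝ)^(k+2)*s₀)^2) * NNReal.pi := by
      intro k
      calc volume (S k) ≤ volume (ball (a⁻¹) ((2:ℝ)^(k+2)*s₀)) := measure_mono (hSsub k)
        _ = ENNReal.ofReal ((2:ℝ)^(k+2)*s₀) ^ 2 * NNReal.pi := Complex.volume_ball _ _
        _ = ENNReal.ofReal (((2:ℝ)^(k+2)*s₀)^2) * NNReal.pi := by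
            rw [ENNReal.ofReal_pow (by positivity)]
    have hint : ∀ k, ∫⁻ z in S k, ENNReal.ofReal (‖1 - a*z‖ ^ (-c)) ∂volume
        ≤ ENNReal.ofReal (((2:ℝ)^k*s₀)^(-c)) * (ENNReal.ofReal (((2:ℝ)^(k+2)*s₀)^2) * NNReal.pi) := by
      intro k
      calc ∫⁻ z in S k, ENNReal.ofReal (‖1 - a*z‖ ^ (-c)) ∂volume
          ≤ ∫⁻ _ in S k, ENNReal.ofReal (((2:ℝ)^k*s₀)^(-c)) ∂volume := by
            refine setLIntegral_mono measurable_const ?_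
            intro z hzS
            exact ENNReal.ofReal_le_ofReal
              (Real.rpow_le_rpow_of_nonpos (by positivity) hzS.2.1 (by linarith))
        _ = ENNReal.ofReal (((2:ℝ)^k*s₀)^(-c)) * volume (S k) := setLIntegral_const _ _
        _ ≤ _ := by
            exact mul_le_mul_right (hvol k) _
    have h2R : (0:ℝ) < 2 := by norm_num
    have hpowaux : ∀ (x : ℝ), 0 ≤ x → ∀ (j : ℕ) (y : ℝ), ((x:ℝ)^j) ^ y = x ^ ((j:ℝ)*y) := by
      intro x hx j y
      rw [← Real.rpow_natCast x j, ← Real.rpow_mul hx]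
    have hreal : ∀ k : ℕ, ((2:ℝ)^k*s₀)^(-c) * ((2:ℝ)^(k+2)*s₀)^2
        = (16 * s₀ ^ ((2:ℝ)-c)) * ((2:ℝ) ^ ((2:ℝ)-c))^k := by
      intro k
      rw [Real.mul_rpow (by positivity) hs₀.le, mul_pow]
      rw [hpowaux 2 h2R.le k (-c)]
      rw [show ((2:ℝ)^(k+2))^2 = (2:ℝ)^((k+2)*2) from (pow_mul 2 (k+2) 2).symm]
      rw [show ((2:ℝ)^((2:ℝ)-c))^k = (2:ℝ)^(((2:ℝ)-c)*(k:ℝ)) by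
        rw [← Real.rpow_natCast ((2:ℝ)^((2:ℝ)-c)) k, ← Real.rpow_mul h2R.le]]
      rw [show ((2:ℝ))^((k+2)*2) = (2:ℝ)^((((k+2)*2 : ℕ)):ℝ) from (Real.rpow_natCast _ _).symm]
      rw [show (s₀:ℝ)^(2:ℕ) = s₀^((2:ℕ):ℝ) from (Real.rpow_natCast _ _).symm]
      have e2 : ∀ u v : ℝ, (2:ℝ)^u * (2:ℝ)^v = 2^(u+v) := fun u v => (Real.rpow_add h2R u v).symm
      have es : ∀ u v : ℝ, s₀^u * s₀^v = s₀^(u+v) := fun u v => (Real.rpow_add hs₀ u v).symm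
      calc (2:ℝ)^((k:ℝ)*(-c)) * s₀^(-c) * ((2:ℝ)^((((k+2)*2 : ℕ)):ℝ) * s₀^((2:ℕ):ℝ))
          = ((2:ℝ)^((k:ℝ)*(-c)) * (2:ℝ)^((((k+2)*2 : ℕ)):ℝ)) * (s₀^(-c) * s₀^((2:ℕ):ℝ)) := by
            ring
        _ = (2:ℝ)^((k:ℝ)*(-c) + (((k+2)*2 : ℕ)):ℝ) * s₀^(-c + ((2:ℕ):ℝ)) := by rw [e2, es]
        _ = (2:ℝ)^((4:ℝ) + ((2:ℝ)-c)*(k:ℝ)) * s₀^((2:ℝ)-c) := by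
            push_cast
            ring_nf
        _ = (2:ℝ)^(4:ℝ) * (2:ℝ)^(((2:ℝ)-c)*(k:ℝ)) * s₀^((2:ℝ)-c) := by rw [Real.rpow_add h2R]
        _ = (16 * s₀ ^ ((2:ℝ)-c)) * (2:ℝ)^(((2:ℝ)-c)*(k:ℝ)) := by
            rw [show (2:ℝ)^(4:ℝ) = ((2:ℝ)^((4:ℕ):ℝ)) by norm_num, Real.rpow_natCast]
            norm_num; ring
    have hs₀eq : (16:ℝ) * s₀^((2:ℝ)-c) = (16 * 2^(c-2)) * s^((2:ℝ)-c) := by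
      rw [hs₀def, Real.div_rpow hs.le h2R.le]
      rw [div_eq_mul_inv, ← Real.rpow_neg h2R.le]
      rw [show -((2:ℝ)-c) = c - 2 by ring]
      ring
    have heq : ∀ k : ℕ, ENNReal.ofReal (((2:ℝ)^k*s₀)^(-c))
          * (ENNReal.ofReal (((2:ℝ)^(k+2)*s₀)^2) * NNReal.pi)
        = (NNReal.pi : ℝ≥0∞) * ENNReal.ofReal (16 * 2^(c-2)) * ENNReal.ofReal (s^((2:ℝ)-c)) * r₀^k := by
      intro k
      rw [← mul_assoc, ← ENNReal.ofReal_mul (by positivity), hreal k, hs₀eq]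
      rw [ENNReal.ofReal_mul (by positivity), ENNReal.ofReal_mul (by positivity)]
      rw [ENNReal.ofReal_pow (by positivity), hr₀]
      ring
    calc ∫⁻ z in ball (0:ℂ) 1, ENNReal.ofReal (‖1 - a * z‖ ^ (-c)) ∂volume
        ≤ ∫⁻ z in ⋃ k, S k, ENNReal.ofReal (‖1 - a * z‖ ^ (-c)) ∂volume :=
          lintegral_mono_set hcover
      _ ≤ ∑' k, ∫⁻ z in S k, ENNReal.ofReal (‖1 - a * z‖ ^ (-c)) ∂volume :=
          lintegral_iUnion_le _ _
      _ ≤ ∑' k, (ENNReal.ofReal (((2:ℝ)^k*s₀)^(-c))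
            * (ENNReal.ofReal (((2:ℝ)^(k+2)*s₀)^2) * NNReal.pi)) := ENNReal.tsum_le_tsum hint
      _ = (NNReal.pi : ℝ≥0∞) * ENNReal.ofReal (16 * 2^(c-2)) * ENNReal.ofReal (s^((2:ℝ)-c))
            * (1 - r₀)⁻¹ := by
          rw [tsum_congr heq, ENNReal.tsum_mul_left, ENNReal.tsum_geometric]
      _ ≤ (ENNReal.ofReal ((2:ℝ) ^ c * Real.pi)
            + (NNReal.pi : ℝ≥0∞) * ENNReal.ofReal (16 * (2:ℝ) ^ (c - 2)) * (1 - r₀)⁻¹)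
            * ENNReal.ofReal (s ^ ((2:ℝ) - c)) := by
          rw [show (NNReal.pi : ℝ≥0∞) * ENNReal.ofReal (16 * 2^(c-2)) * ENNReal.ofReal (s^((2:ℝ)-c))
              * (1 - r₀)⁻¹
            = ((NNReal.pi : ℝ≥0∞) * ENNReal.ofReal (16 * 2^(c-2)) * (1 - r₀)⁻¹)
              * ENNReal.ofReal (s^((2:ℝ)-c)) by ring]
          gcongr
          exact le_add_self

lemma disc_identity (w z : ℂ) :
    ‖1 - (starRingEnd ℂ) w * z‖ ^ 2 - ‖z - w‖ ^ 2
      = (1 - ‖z‖ ^ 2) * (1 - ‖w‖ ^ 2) := by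
  have h1 : ∀ u : ℂ, (‖u‖ : ℝ) ^ 2 = Complex.normSq u := Complex.sq_norm
  rw [h1, h1, h1, h1]
  have key : ((Complex.normSq (1 - (starRingEnd ℂ) w * z) - Complex.normSq (z - w) : ℝ) : ℂ)
      = (((1 - Complex.normSq z) * (1 - Complex.normSq w) : ℝ) : ℂ) := by
    push_cast [← Complex.mul_conj]
    simp only [map_sub, map_mul, map_one, Complex.conj_conj]
    ring
  have := Complex.ofReal_inj.mp key
  linarith [this]

set_option maxHeartbeats 2000000 in
lemma bball_bound (r : ℝ) (hr : 0 < r) : ∃ cr : ℝ, 1 ≤ cr ∧ ∀ w : ℂ, ‖w‖ < 1 →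
    ∀ z ∈ bball w r, ‖1 - (starRingEnd ℂ) w * z‖ ≤ cr * (1 - ‖w‖ ^ 2) := by
  set E := Real.exp (2*r) with hE
  have hexp : 1 < E := by
    rw [hE, show (1:ℝ) = Real.exp 0 by simp]
    exact Real.exp_lt_exp.mpr (by linarith)
  set ρ₀ : ℝ := (E - 1)/(E + 1) with hρ₀def
  have hE1 : (0:ℝ) < E + 1 := by linarith
  have hρ₀0 : 0 ≤ ρ₀ := by
    apply div_nonneg <;> linarith
  have hρ₀1 : ρ₀ < 1 := by
    rw [hρ₀def, div_lt_one hE1]; linarith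
  have hρ₀sq : 0 < 1 - ρ₀^2 := by nlinarith
  refine ⟨max 1 (2/(1-ρ₀^2)), le_max_left _ _, ?_⟩
  intro w hw z hz
  obtain ⟨hzb, hzm⟩ := hz
  have hz1 : ‖z‖ < 1 := by simpa [Complex.dist_eq] using hzb
  set a := (starRingEnd ℂ) w with hadef
  set d := ‖1 - a*z‖ with hddef
  have hwz : ‖w‖ * ‖z‖ < 1 := by
    nlinarith [norm_nonneg w, norm_nonneg z]
  have hd1 : 1 - ‖w‖ * ‖z‖ ≤ d := by
    have h1 : ‖(1:ℂ)‖ - ‖a*z‖ ≤ ‖1 - a*z‖ := by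
      simpa using norm_sub_norm_le (1:ℂ) (a*z)
    simpa [norm_mul, hadef, Complex.norm_conj] using h1
  have hd0 : 0 < d := by linarith
  have hid := disc_identity w z
  rw [← hadef, ← hddef] at hid
  have hz2p : 0 < 1 - ‖z‖ ^ 2 := by nlinarith [norm_nonneg z]
  have hw2p : 0 < 1 - ‖w‖ ^ 2 := by nlinarith [norm_nonneg w]
  have hpos : 0 < (1 - ‖z‖ ^ 2) * (1 - ‖w‖ ^ 2) := mul_pos hz2p hw2p
  have hzw2 : ‖z - w‖ ^ 2 < d ^ 2 := by linarith
  have hzwd : ‖z - w‖ < d := by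
    nlinarith [norm_nonneg (z - w)]
  have hρeq : prho z w = ‖z - w‖ / d := by
    rw [prho, norm_div, hddef, hadef]
  set ρ := prho z w with hρdef
  have hρ0 : 0 ≤ ρ := norm_nonneg _
  have hzm' : (1/2) * Real.log ((1 + ρ)/(1 - ρ)) < r := by
    have e : bmetric z w = (1/2) * Real.log ((1 + ρ)/(1 - ρ)) := by
      rw [bmetric, hρdef]
    rwa [e] at hzm
  set t := ‖z - w‖ with htdef
  have ht0 : 0 ≤ t := norm_nonneg _
  set sw := 1 - ‖w‖ ^ 2 with hswdef
  set sz := 1 - ‖z‖ ^ 2 with hszdef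
  have hsz2d : sz ≤ 2 * d := by
    rw [hszdef]
    nlinarith [norm_nonneg z, norm_nonneg w]
  clear_value ρ t sw sz d E ρ₀
  clear hzm hρdef htdef hswdef hszdef hddef hadef a hzb
  have hρ1 : ρ < 1 := by rw [hρeq]; exact (div_lt_one hd0).mpr hzwd
  -- from the metric inequality
  have hX0 : 0 < (1 + ρ)/(1 - ρ) := by
    apply div_pos <;> linarith
  have hXlt : (1 + ρ)/(1 - ρ) < E := by
    have hlog : Real.log ((1 + ρ)/(1 - ρ)) < 2*r := by
      linarith
    calc (1 + ρ)/(1 - ρ) = Real.exp (Real.log ((1 + ρ)/(1 - ρ))) := (Real.exp_log hX0).symm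
      _ < E := by rw [hE]; exact Real.exp_lt_exp.mpr hlog
  have hρρ₀ : ρ < ρ₀ := by
    rw [hρ₀def, lt_div_iff₀ hE1]
    have h2 : 1 + ρ < E * (1 - ρ) := by
      rw [div_lt_iff₀ (by linarith : (0:ℝ) < 1 - ρ)] at hXlt
      linarith
    nlinarith
  have hρsq : 1 - ρ₀^2 ≤ 1 - ρ^2 := by
    have h3 : ρ^2 ≤ ρ₀^2 := pow_le_pow_left₀ hρ0 hρρ₀.le 2
    linarith
  -- chain
  have hρd : ρ * d = t := by
    rw [hρeq]
    exact div_mul_cancel₀ t hd0.ne'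
  have hsw0 : (0:ℝ) ≤ sw := hw2p.le
  have hchain : (1 - ρ₀^2) * d^2 ≤ 2 * d * sw := by
    have ht2 : t^2 = ρ^2 * d^2 := by rw [← hρd]; ring
    have e1 : (1 - ρ^2) * d^2 = d^2 - t^2 := by rw [ht2]; ring
    calc (1 - ρ₀^2) * d^2 ≤ (1 - ρ^2) * d^2 :=
          mul_le_mul_of_nonneg_right hρsq (sq_nonneg d)
      _ = sz * sw := by rw [e1, hid]
      _ ≤ 2 * d * sw := mul_le_mul_of_nonneg_right hsz2d hsw0
  have hfinal : d ≤ (2/(1-ρ₀^2)) * sw := by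
    rw [div_mul_eq_mul_div, le_div_iff₀ hρ₀sq]
    nlinarith [hchain, hd0]
  calc d ≤ (2/(1-ρ₀^2)) * sw := hfinal
    _ ≤ max 1 (2/(1-ρ₀^2)) * sw :=
        mul_le_mul_of_nonneg_right (le_max_right (1:ℝ) (2/(1-ρ₀^2))) hsw0

lemma hasDerivAt_tf (A a : ℂ) (n : ℕ) (hn : 1 ≤ n) (z : ℂ) (hz : 1 - a*z ≠ 0) :
    HasDerivAt (fun y => A * ((1 - a*y)^n)⁻¹) (A * ((n:ℂ) * a * ((1 - a*z)^(n+1))⁻¹)) z := by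
  obtain ⟨m, rfl⟩ : ∃ m, n = m + 1 := ⟨n-1, by omega⟩
  have h1 : HasDerivAt (fun y : ℂ => 1 - a*y) (-a) z := by
    simpa using ((hasDerivAt_id z).const_mul a).const_sub 1
  have h2 := h1.fun_pow (m+1)
  have h3 := (h2.inv (pow_ne_zero (m+1) hz)).const_mul A
  refine HasDerivAt.congr_deriv h3 ?_
  simp only [Nat.add_sub_cancel]
  field_simp
  ring

lemma hasDerivAt_tg (B a : ℂ) (n : ℕ) (z : ℂ) (hz : 1 - a*z ≠ 0) :
    HasDerivAt (fun y => B * y * ((1 - a*y)^(n+1))⁻¹)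
      (B * ((1 + (n:ℂ)*a*z) * ((1 - a*z)^(n+2))⁻¹)) z := by
  have h1 : HasDerivAt (fun y : ℂ => 1 - a*y) (-a) z := by
    simpa using ((hasDerivAt_id z).const_mul a).const_sub 1
  have h2 := h1.fun_pow (n+1)
  have h3 := h2.inv (pow_ne_zero (n+1) hz)
  have h4 : HasDerivAt (fun y : ℂ => B * y) B z := by
    simpa using (hasDerivAt_id z).const_mul B
  have h5 := h4.mul h3
  refine HasDerivAt.congr_deriv h5 ?_
  simp only [Nat.add_sub_cancel, Pi.inv_apply, Nat.cast_add, Nat.cast_one]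
  field_simp
  ring

lemma add_rpow_le_two_rpow (x y : ℝ≥0∞) (q : ℝ) (hq : 0 ≤ q) :
    (x + y)^q ≤ 2^q * (x^q + y^q) := by
  have h1 : x + y ≤ 2 * max x y := by
    rcases le_total x y with h | h
    · calc x + y ≤ y + y := by gcongr
        _ = 2 * y := by ring
        _ ≤ 2 * max x y := by gcongr; exact le_max_right _ _
    · calc x + y ≤ x + x := by gcongr
        _ = 2 * x := by ring
        _ ≤ 2 * max x y := by gcongr; exact le_max_left _ _
  calc (x + y)^q ≤ (2 * max x y)^q := ENNReal.rpow_le_rpow h1 hq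
    _ = 2^q * (max x y)^q := ENNReal.mul_rpow_of_nonneg _ _ hq
    _ ≤ 2^q * (x^q + y^q) := by
        gcongr
        rcases le_total x y with h | h
        · rw [max_eq_right h]; exact le_add_self
        · rw [max_eq_left h]; exact le_self_add


lemma abs_one_sub_pos (w z : ℂ) (hw : ‖w‖ < 1) (hz : ‖z‖ < 1) :
    0 < ‖1 - (starRingEnd ℂ) w * z‖ := by
  have h1 : ‖(1:ℂ)‖ - ‖(starRingEnd ℂ) w * z‖
      ≤ ‖1 - (starRingEnd ℂ) w * z‖ := by
    simpa using norm_sub_norm_le (1:ℂ) ((starRingEnd ℂ) w * z)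
  have h2 : ‖(starRingEnd ℂ) w * z‖ < 1 := by
    rw [norm_mul, Complex.norm_conj]
    nlinarith [norm_nonneg w, norm_nonneg z]
  simp only [norm_one] at h1
  linarith

lemma pow_inv_rpow (t : ℝ) (ht : 0 < t) (m : ℕ) (p : ℝ) :
    ((t^m)⁻¹) ^ p = t ^ (-((m:ℝ)*p)) := by
  rw [Real.inv_rpow (by positivity), ← Real.rpow_natCast t m, ← Real.rpow_mul ht.le,
    ← Real.rpow_neg ht.le]

end Aux

set_option maxHeartbeats 4000000 in
theorem stmt7 (p q : ℝ) (hp : 0 < p) (hpq : p ≤ q) (hpq1 : 2 / p - 2 / q ≤ 1)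
    (μ : Measure ℂ) (u₀ u₁ : ℂ → ℂ)
    (hu₀ : DifferentiableOn ℂ u₀ (ball (0 : ℂ) 1))
    (hu₁ : DifferentiableOn ℂ u₁ (ball (0 : ℂ) 1))
    (C : ℝ≥0) (hcar : ∀ f : ℂ → ℂ, MemAp p f →
      ∫⁻ z in ball (0 : ℂ) 1,
          (‖u₀ z * f z + u₁ z * deriv f z‖₊ : ℝ≥0∞) ^ q ∂μ
        ≤ (C : ℝ≥0∞) * (Bnorm p f) ^ q) :
    ∀ r : ℝ, 0 < r → ∃ M : ℝ≥0, ∀ w ∈ ball (0 : ℂ) 1,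
      ∫⁻ z in bball w r, (‖u₁ z‖₊ : ℝ≥0∞) ^ q ∂μ
        ≤ (M : ℝ≥0∞) * ENNReal.ofReal ((1 - ‖w‖ ^ 2) ^ ((1 + 2 / p) * q)) := by
  intro r hr
  obtain ⟨cr, hcr1, hcr⟩ := bball_bound r hr
  have hq : 0 < q := lt_of_lt_of_le hp hpq
  set n : ℕ := ⌈2/p⌉₊ + 1 with hndef
  have hn1 : 1 ≤ n := by omega
  have hn2p : 2/p < (n:ℝ) := by
    calc 2/p ≤ (⌈2/p⌉₊ : ℝ) := Nat.le_ceil _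
      _ < (n:ℝ) := by rw [hndef]; push_cast; linarith
  have hnp : 2 < (n:ℝ) * p := by
    have := mul_lt_mul_of_pos_right hn2p hp
    rwa [div_mul_cancel₀ 2 hp.ne'] at this
  have hn1p : 2 < ((n:ℝ) + 1) * p := by nlinarith
  obtain ⟨K₁, hK₁top, hK₁⟩ := FR ((n:ℝ)*p) hnp
  obtain ⟨K₂, hK₂top, hK₂⟩ := FR (((n:ℝ)+1)*p) hn1p
  set N₁ : ℝ≥0∞ := (ENNReal.ofReal Real.pi)⁻¹ * K₁ with hN₁def
  set N₂ : ℝ≥0∞ := (ENNReal.ofReal Real.pi)⁻¹ * K₂ with hN₂def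
  have hN₁top : N₁ ≠ ⊤ := by
    refine ENNReal.mul_ne_top ?_ hK₁top
    simp [ENNReal.inv_ne_top, ENNReal.ofReal_pos, Real.pi_pos]
  have hN₂top : N₂ ≠ ⊤ := by
    refine ENNReal.mul_ne_top ?_ hK₂top
    simp [ENNReal.inv_ne_top, ENNReal.ofReal_pos, Real.pi_pos]
  set E₁ : ℝ≥0∞ := ENNReal.ofReal ((2 * cr^(n+2))^q) with hE₁def
  set M' : ℝ≥0∞ := E₁ * C * (N₁^(q/p) + N₂^(q/p)) with hM'def
  have hM'top : M' ≠ ⊤ := by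
    refine ENNReal.mul_ne_top (ENNReal.mul_ne_top ENNReal.ofReal_ne_top ENNReal.coe_ne_top) ?_
    exact ENNReal.add_ne_top.mpr ⟨ENNReal.rpow_ne_top_of_nonneg (by positivity) hN₁top,
      ENNReal.rpow_ne_top_of_nonneg (by positivity) hN₂top⟩
  refine ⟨M'.toNNReal, ?_⟩
  intro w hwball
  have hw1 : ‖w‖ < 1 := by simpa [Complex.dist_eq] using hwball
  set s : ℝ := 1 - ‖w‖ ^ 2 with hsdef
  have hs : 0 < s := by nlinarith [norm_nonneg w]
  set a : ℂ := (starRingEnd ℂ) w with hadef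
  have hne : ∀ z ∈ ball (0:ℂ) 1, (1:ℂ) - a * z ≠ 0 := by
    intro z hz h0
    have hz1 : ‖z‖ < 1 := by simpa [Complex.dist_eq] using hz
    have := abs_one_sub_pos w z hw1 hz1
    rw [← hadef, h0] at this
    simp at this
  have habs : ∀ z ∈ ball (0:ℂ) 1, 0 < ‖1 - a * z‖ := by
    intro z hz
    have hz1 : ‖z‖ < 1 := by simpa [Complex.dist_eq] using hz
    exact abs_one_sub_pos w z hw1 hz1
  set A : ℝ := s ^ ((n:ℝ) - 2/p) with hAdef
  set B : ℝ := s ^ ((n:ℝ) + 1 - 2/p) with hBdef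
  have hA : 0 < A := Real.rpow_pos_of_pos hs _
  have hB : 0 < B := Real.rpow_pos_of_pos hs _
  set f : ℂ → ℂ := fun y => ((A:ℝ):ℂ) * ((1 - a*y)^n)⁻¹ with hfdef
  set g : ℂ → ℂ := fun y => ((B:ℝ):ℂ) * y * ((1 - a*y)^(n+1))⁻¹ with hgdef
  have hfder : ∀ z ∈ ball (0:ℂ) 1,
      HasDerivAt f (((A:ℝ):ℂ) * ((n:ℂ) * a * ((1 - a*z)^(n+1))⁻¹)) z :=
    fun z hz => hasDerivAt_tf _ a n hn1 z (hne z hz)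
  have hgder : ∀ z ∈ ball (0:ℂ) 1,
      HasDerivAt g (((B:ℝ):ℂ) * ((1 + (n:ℂ)*a*z) * ((1 - a*z)^(n+2))⁻¹)) z :=
    fun z hz => hasDerivAt_tg _ a n z (hne z hz)
  have hfd : ∀ z ∈ ball (0:ℂ) 1,
      deriv f z = ((A:ℝ):ℂ) * ((n:ℂ) * a * ((1 - a*z)^(n+1))⁻¹) :=
    fun z hz => (hfder z hz).deriv
  have hgd : ∀ z ∈ ball (0:ℂ) 1,
      deriv g z = ((B:ℝ):ℂ) * ((1 + (n:ℂ)*a*z) * ((1 - a*z)^(n+2))⁻¹) :=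
    fun z hz => (hgder z hz).deriv
  -- norms of f and g
  have hfnorm : ∀ z : ℂ, ‖f z‖ = A * ((‖1 - a*z‖)^n)⁻¹ := by
    intro z
    rw [hfdef]
    simp only [norm_mul, norm_inv, norm_pow, Complex.norm_real, Real.norm_eq_abs,
      abs_of_pos hA]
  have hgnorm : ∀ z : ℂ, ‖g z‖ = B * ‖z‖ * ((‖1 - a*z‖)^(n+1))⁻¹ := by
    intro z
    rw [hgdef]
    simp only [norm_mul, norm_inv, norm_pow, Complex.norm_real, Real.norm_eq_abs,
      abs_of_pos hB]
  -- Bergman norm bounds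
  have hAp : A ^ p * s ^ (2 - (n:ℝ)*p) = 1 := by
    rw [hAdef, ← Real.rpow_mul hs.le, ← Real.rpow_add hs]
    rw [show ((n:ℝ) - 2/p) * p + (2 - (n:ℝ)*p) = 0 by field_simp; ring]
    exact Real.rpow_zero s
  have hBp : B ^ p * s ^ (2 - ((n:ℝ)+1)*p) = 1 := by
    rw [hBdef, ← Real.rpow_mul hs.le, ← Real.rpow_add hs]
    rw [show ((n:ℝ) + 1 - 2/p) * p + (2 - ((n:ℝ)+1)*p) = 0 by field_simp; ring]
    exact Real.rpow_zero s
  have hfpt : ∀ z ∈ ball (0:ℂ) 1, (‖f z‖₊ : ℝ≥0∞) ^ p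
      ≤ ENNReal.ofReal (A^p) * ENNReal.ofReal (‖1 - a*z‖ ^ (-((n:ℝ)*p))) := by
    intro z hz
    have ht0 := habs z hz
    rw [← ofReal_norm_eq_coe_nnnorm', hfnorm z]
    rw [ENNReal.ofReal_rpow_of_pos (by positivity)]
    rw [Real.mul_rpow hA.le (by positivity), pow_inv_rpow _ ht0]
    rw [ENNReal.ofReal_mul (by positivity)]
  have hgpt : ∀ z ∈ ball (0:ℂ) 1, (‖g z‖₊ : ℝ≥0∞) ^ p
      ≤ ENNReal.ofReal (B^p) * ENNReal.ofReal (‖1 - a*z‖ ^ (-(((n:ℝ)+1)*p))) := by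
    intro z hz
    have ht0 := habs z hz
    have hz1 : ‖z‖ < 1 := by simpa [Complex.dist_eq] using hz
    rw [← ofReal_norm_eq_coe_nnnorm', hgnorm z]
    have hle : B * ‖z‖ * ((‖1 - a*z‖)^(n+1))⁻¹
        ≤ B * ((‖1 - a*z‖)^(n+1))⁻¹ := by
      have h1 : ‖z‖ ≤ 1 := hz1.le
      have h2 : (0:ℝ) ≤ ((‖1 - a*z‖)^(n+1))⁻¹ := by positivity
      have h3 : B * ‖z‖ ≤ B := by
        have := mul_le_mul_of_nonneg_left h1 hB.le
        simpa using this
      exact mul_le_mul_of_nonneg_right h3 h2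
    calc ENNReal.ofReal (B * ‖z‖ * ((‖1 - a*z‖)^(n+1))⁻¹) ^ p
        ≤ ENNReal.ofReal (B * ((‖1 - a*z‖)^(n+1))⁻¹) ^ p :=
          ENNReal.rpow_le_rpow (ENNReal.ofReal_le_ofReal hle) hp.le
      _ = ENNReal.ofReal (B^p) * ENNReal.ofReal (‖1 - a*z‖ ^ (-(((n:ℝ)+1)*p))) := by
          rw [ENNReal.ofReal_rpow_of_pos (by positivity)]
          rw [Real.mul_rpow hB.le (by positivity), pow_inv_rpow _ ht0]
          rw [ENNReal.ofReal_mul (by positivity)]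
          congr 3
          push_cast
          ring
  have hmeas_rpow : ∀ c : ℝ, Measurable fun z : ℂ =>
      ENNReal.ofReal (‖1 - a*z‖ ^ (-c)) := by
    intro c
    have h1 : Measurable fun z : ℂ => ‖1 - a*z‖ := by
      fun_prop
    fun_prop
  have hBf : (∫⁻ z, (‖f z‖₊ : ℝ≥0∞) ^ p ∂dA) ≤ N₁ := by
    rw [dA, lintegral_smul_measure, smul_eq_mul]
    rw [hN₁def]
    gcongr
    calc ∫⁻ z in ball (0:ℂ) 1, (‖f z‖₊ : ℝ≥0∞) ^ p ∂volume
        ≤ ∫⁻ z in ball (0:ℂ) 1,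
            ENNReal.ofReal (A^p) * ENNReal.ofReal (‖1 - a*z‖ ^ (-((n:ℝ)*p))) ∂volume :=
          setLIntegral_mono (by fun_prop (disch := exact hmeas_rpow ((n:ℝ)*p))) hfpt
      _ = ENNReal.ofReal (A^p) *
            ∫⁻ z in ball (0:ℂ) 1, ENNReal.ofReal (‖1 - a*z‖ ^ (-((n:ℝ)*p))) ∂volume :=
          lintegral_const_mul' _ _ ENNReal.ofReal_ne_top
      _ ≤ ENNReal.ofReal (A^p) * (K₁ * ENNReal.ofReal (s ^ (2 - (n:ℝ)*p))) := by
          gcongr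
          exact hK₁ w hw1
      _ = K₁ * ENNReal.ofReal (A^p * s ^ (2 - (n:ℝ)*p)) := by
          rw [ENNReal.ofReal_mul (by positivity)]
          ring
      _ = K₁ := by rw [hAp]; simp
  have hBg : (∫⁻ z, (‖g z‖₊ : ℝ≥0∞) ^ p ∂dA) ≤ N₂ := by
    rw [dA, lintegral_smul_measure, smul_eq_mul]
    rw [hN₂def]
    gcongr
    calc ∫⁻ z in ball (0:ℂ) 1, (‖g z‖₊ : ℝ≥0∞) ^ p ∂volume
        ≤ ∫⁻ z in ball (0:ℂ) 1,
            ENNReal.ofReal (B^p) * ENNReal.ofReal (‖1 - a*z‖ ^ (-(((n:ℝ)+1)*p))) ∂volume :=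
          setLIntegral_mono (by fun_prop (disch := exact hmeas_rpow (((n:ℝ)+1)*p))) hgpt
      _ = ENNReal.ofReal (B^p) *
            ∫⁻ z in ball (0:ℂ) 1, ENNReal.ofReal (‖1 - a*z‖ ^ (-(((n:ℝ)+1)*p))) ∂volume :=
          lintegral_const_mul' _ _ ENNReal.ofReal_ne_top
      _ ≤ ENNReal.ofReal (B^p) * (K₂ * ENNReal.ofReal (s ^ (2 - ((n:ℝ)+1)*p))) := by
          gcongr
          exact hK₂ w hw1
      _ = K₂ * ENNReal.ofReal (B^p * s ^ (2 - ((n:ℝ)+1)*p)) := by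
          rw [ENNReal.ofReal_mul (by positivity)]
          ring
      _ = K₂ := by rw [hBp]; simp
  have hmemf : MemAp p f := by
    constructor
    · exact fun z hz => ((hfder z hz).differentiableAt).differentiableWithinAt
    · exact lt_of_le_of_lt hBf (lt_of_le_of_ne le_top hN₁top)
  have hmemg : MemAp p g := by
    constructor
    · exact fun z hz => ((hgder z hz).differentiableAt).differentiableWithinAt
    · exact lt_of_le_of_lt hBg (lt_of_le_of_ne le_top hN₂top)
  have hBnf : (Bnorm p f) ^ q ≤ N₁ ^ (q/p) := by
    rw [Bnorm, ← ENNReal.rpow_mul, show 1/p*q = q/p by ring]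
    exact ENNReal.rpow_le_rpow hBf (by positivity)
  have hBng : (Bnorm p g) ^ q ≤ N₂ ^ (q/p) := by
    rw [Bnorm, ← ENNReal.rpow_mul, show 1/p*q = q/p by ring]
    exact ENNReal.rpow_le_rpow hBg (by positivity)
  have hcarF := (hcar f hmemf).trans (mul_le_mul_right hBnf _)
  have hcarG := (hcar g hmemg).trans (mul_le_mul_right hBng _)
  set F : ℂ → ℂ := fun z => u₀ z * f z + u₁ z * deriv f z with hFdef
  set G : ℂ → ℂ := fun z => u₀ z * g z + u₁ z * deriv g z with hGdef
  have hcarF' : ∫⁻ z in ball (0:ℂ) 1, (‖F z‖₊:ℝ≥0∞)^q ∂μ ≤ (C:ℝ≥0∞) * N₁^(q/p) := by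
    simp only [hFdef]
    exact hcarF
  have hcarG' : ∫⁻ z in ball (0:ℂ) 1, (‖G z‖₊:ℝ≥0∞)^q ∂μ ≤ (C:ℝ≥0∞) * N₂^(q/p) := by
    simp only [hGdef]
    exact hcarG
  set W : ℂ → ℂ := fun z => ((A*B : ℝ):ℂ) * ((1 - a*z)^(2*n+2))⁻¹ with hWdef
  have hWnorm : ∀ z : ℂ, ‖W z‖ = A * B * ((‖1 - a*z‖)^(2*n+2))⁻¹ := by
    intro z
    rw [hWdef]
    simp only [norm_mul, norm_inv, norm_pow, Complex.norm_real, Real.norm_eq_abs,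
      abs_of_pos hA, abs_of_pos hB]
  have hWid : ∀ z ∈ ball (0:ℂ) 1, u₁ z * W z = f z * G z - g z * F z := by
    intro z hz
    have h0 := hne z hz
    simp only [hWdef, hFdef, hGdef]
    rw [hfd z hz, hgd z hz]
    simp only [hfdef, hgdef]
    push_cast
    simp only [← inv_pow]
    ring
  have hkey : ∀ z ∈ bball w r,
      ‖u₁ z‖ ≤ (cr^(n+2) * s^((1:ℝ)+2/p)) * (‖F z‖ + ‖G z‖) := by
    intro z hz
    have hz1 : z ∈ ball (0:ℂ) 1 := hz.1
    have ht0 : 0 < ‖1 - a*z‖ := habs z hz1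
    have htcr : ‖1 - a*z‖ ≤ cr * s := hcr w hw1 z hz
    set t := ‖1 - a*z‖ with htdef
    have hz2 : ‖z‖ ≤ 1 := by
      have : ‖z‖ < 1 := by simpa [Complex.dist_eq] using hz1
      linarith
    have hsB : s^(n+2 : ℕ) = s^((1:ℝ)+2/p) * B := by
      rw [hBdef, ← Real.rpow_add hs, ← Real.rpow_natCast s (n+2)]
      congr 1
      push_cast
      ring
    have hsA : s^(n+1 : ℕ) = s^((1:ℝ)+2/p) * A := by
      rw [hAdef, ← Real.rpow_add hs, ← Real.rpow_natCast s (n+1)]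
      congr 1
      push_cast
      ring
    have hkey1 : t^(n+2) ≤ (cr^(n+2) * s^((1:ℝ)+2/p)) * B := by
      calc t^(n+2) ≤ (cr*s)^(n+2) := pow_le_pow_left₀ ht0.le htcr (n+2)
        _ = cr^(n+2) * s^(n+2 : ℕ) := mul_pow cr s (n+2)
        _ = (cr^(n+2) * s^((1:ℝ)+2/p)) * B := by rw [hsB]; ring
    have hkey2 : t^(n+1) ≤ (cr^(n+2) * s^((1:ℝ)+2/p)) * A := by
      calc t^(n+1) ≤ (cr*s)^(n+1) := pow_le_pow_left₀ ht0.le htcr (n+1)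
        _ = cr^(n+1) * s^(n+1 : ℕ) := mul_pow cr s (n+1)
        _ ≤ cr^(n+2) * s^(n+1 : ℕ) := by
            have h5 : cr^(n+1) ≤ cr^(n+2) := pow_le_pow_right₀ hcr1 (by omega)
            have h6 : (0:ℝ) ≤ s^(n+1 : ℕ) := by positivity
            exact mul_le_mul_of_nonneg_right h5 h6
        _ = (cr^(n+2) * s^((1:ℝ)+2/p)) * A := by rw [hsA]; ring
    have claimf : ‖f z‖ ≤ (cr^(n+2) * s^((1:ℝ)+2/p)) * ‖W z‖ := by
      rw [hfnorm z, hWnorm z, ← htdef]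
      rw [show t^(2*n+2) = t^n * t^(n+2) by ring, mul_inv]
      calc A * (t^n)⁻¹ = (A * (t^n)⁻¹) * 1 := (mul_one _).symm
        _ ≤ (A * (t^n)⁻¹) * ((cr^(n+2) * s^((1:ℝ)+2/p)) * B * (t^(n+2))⁻¹) := by
            apply mul_le_mul_of_nonneg_left ?_ (by positivity)
            rw [show (cr^(n+2) * s^((1:ℝ)+2/p)) * B * (t^(n+2))⁻¹
                = ((cr^(n+2) * s^((1:ℝ)+2/p)) * B) / t^(n+2) by ring,
              le_div_iff₀ (pow_pos ht0 _), one_mul]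
            exact hkey1
        _ = (cr^(n+2) * s^((1:ℝ)+2/p)) * (A * B * ((t^n)⁻¹ * (t^(n+2))⁻¹)) := by ring
    have claimg : ‖g z‖ ≤ (cr^(n+2) * s^((1:ℝ)+2/p)) * ‖W z‖ := by
      rw [hgnorm z, hWnorm z, ← htdef]
      rw [show t^(2*n+2) = t^(n+1) * t^(n+1) by ring, mul_inv]
      calc B * ‖z‖ * (t^(n+1))⁻¹ ≤ B * (t^(n+1))⁻¹ := by
            have h3 : B * ‖z‖ ≤ B := by
              have := mul_le_mul_of_nonneg_left hz2 hB.le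
              simpa using this
            exact mul_le_mul_of_nonneg_right h3 (by positivity)
        _ = (B * (t^(n+1))⁻¹) * 1 := (mul_one _).symm
        _ ≤ (B * (t^(n+1))⁻¹) * ((cr^(n+2) * s^((1:ℝ)+2/p)) * A * (t^(n+1))⁻¹) := by
            apply mul_le_mul_of_nonneg_left ?_ (by positivity)
            rw [show (cr^(n+2) * s^((1:ℝ)+2/p)) * A * (t^(n+1))⁻¹
                = ((cr^(n+2) * s^((1:ℝ)+2/p)) * A) / t^(n+1) by ring,
              le_div_iff₀ (pow_pos ht0 _), one_mul]
            exact hkey2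
        _ = (cr^(n+2) * s^((1:ℝ)+2/p)) * (A * B * ((t^(n+1))⁻¹ * (t^(n+1))⁻¹)) := by ring
    have hWpos : 0 < ‖W z‖ := by
      rw [hWnorm z]
      positivity
    have hueq : ‖u₁ z‖ * ‖W z‖ = ‖f z * G z - g z * F z‖ := by
      rw [← norm_mul, hWid z hz1]
    have hineq : ‖f z * G z - g z * F z‖ ≤ ‖f z‖ * ‖G z‖ + ‖g z‖ * ‖F z‖ := by
      calc ‖f z * G z - g z * F z‖ ≤ ‖f z * G z‖ + ‖g z * F z‖ := norm_sub_le _ _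
        _ = ‖f z‖ * ‖G z‖ + ‖g z‖ * ‖F z‖ := by simp only [norm_mul]
    have hfinal : ‖u₁ z‖ * ‖W z‖
        ≤ ((cr^(n+2) * s^((1:ℝ)+2/p)) * (‖F z‖ + ‖G z‖)) * ‖W z‖ := by
      calc ‖u₁ z‖ * ‖W z‖ = ‖f z * G z - g z * F z‖ := hueq
        _ ≤ ‖f z‖ * ‖G z‖ + ‖g z‖ * ‖F z‖ := hineq
        _ ≤ ((cr^(n+2) * s^((1:ℝ)+2/p)) * ‖W z‖) * ‖G z‖
              + ((cr^(n+2) * s^((1:ℝ)+2/p)) * ‖W z‖) * ‖F z‖ :=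
            add_le_add (mul_le_mul_of_nonneg_right claimf (norm_nonneg _))
              (mul_le_mul_of_nonneg_right claimg (norm_nonneg _))
        _ = ((cr^(n+2) * s^((1:ℝ)+2/p)) * (‖F z‖ + ‖G z‖)) * ‖W z‖ := by ring
    exact le_of_mul_le_mul_right hfinal hWpos
  set E₂ : ℝ≥0∞ := ENNReal.ofReal (s^(((1:ℝ)+2/p)*q)) with hE₂def
  have hc₁ : (0:ℝ) < cr^(n+2) * s^((1:ℝ)+2/p) := by positivity
  have hcq : (cr^(n+2) * s^((1:ℝ)+2/p))^q * 2^q = (2*cr^(n+2))^q * s^(((1:ℝ)+2/p)*q) := by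
    rw [Real.mul_rpow (by positivity) (by positivity), Real.mul_rpow (by norm_num) (by positivity),
      Real.rpow_mul hs.le]
    ring
  have hpt : ∀ z ∈ bball w r, (‖u₁ z‖₊:ℝ≥0∞)^q
      ≤ E₁ * E₂ * ((‖F z‖₊:ℝ≥0∞)^q + (‖G z‖₊:ℝ≥0∞)^q) := by
    intro z hz
    calc (‖u₁ z‖₊:ℝ≥0∞)^q = (ENNReal.ofReal ‖u₁ z‖)^q := by rw [ofReal_norm_eq_coe_nnnorm']
      _ ≤ (ENNReal.ofReal ((cr^(n+2) * s^((1:ℝ)+2/p)) * (‖F z‖ + ‖G z‖)))^q :=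
          ENNReal.rpow_le_rpow (ENNReal.ofReal_le_ofReal (hkey z hz)) hq.le
      _ = (ENNReal.ofReal (cr^(n+2) * s^((1:ℝ)+2/p)))^q * (ENNReal.ofReal (‖F z‖ + ‖G z‖))^q := by
          rw [ENNReal.ofReal_mul hc₁.le, ENNReal.mul_rpow_of_nonneg _ _ hq.le]
      _ = (ENNReal.ofReal (cr^(n+2) * s^((1:ℝ)+2/p)))^q
            * ((‖F z‖₊:ℝ≥0∞) + (‖G z‖₊:ℝ≥0∞))^q := by
          rw [ENNReal.ofReal_add (norm_nonneg _) (norm_nonneg _), ofReal_norm_eq_coe_nnnorm',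
            ofReal_norm_eq_coe_nnnorm']
      _ ≤ (ENNReal.ofReal (cr^(n+2) * s^((1:ℝ)+2/p)))^q
            * (2^q * ((‖F z‖₊:ℝ≥0∞)^q + (‖G z‖₊:ℝ≥0∞)^q)) :=
          mul_le_mul_right (add_rpow_le_two_rpow _ _ q hq.le) _
      _ = ((ENNReal.ofReal (cr^(n+2) * s^((1:ℝ)+2/p)))^q * 2^q)
            * ((‖F z‖₊:ℝ≥0∞)^q + (‖G z‖₊:ℝ≥0∞)^q) := by ring
      _ = E₁ * E₂ * ((‖F z‖₊:ℝ≥0∞)^q + (‖G z‖₊:ℝ≥0∞)^q) := by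
          congr 1
          rw [ENNReal.ofReal_rpow_of_pos hc₁,
            show (2:ℝ≥0∞) = ENNReal.ofReal 2 by norm_num,
            ENNReal.ofReal_rpow_of_pos (by norm_num : (0:ℝ) < 2),
            ← ENNReal.ofReal_mul (by positivity), hcq, hE₁def, hE₂def,
            ← ENNReal.ofReal_mul (by positivity)]
  -- measurability
  have hbmeas : MeasurableSet (bball w r) := by
    have h1 : Measurable fun z : ℂ => prho z w := by
      unfold prho
      fun_prop
    have h2 : Measurable fun z : ℂ => bmetric z w := by
      unfold bmetric
      exact ((Real.measurable_log.comp
        ((measurable_const.add h1).div (measurable_const.sub h1)))).const_mul _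
    have he : bball w r = ball (0:ℂ) 1 ∩ {z | bmetric z w < r} := rfl
    rw [he]
    exact measurableSet_ball.inter (measurableSet_lt h2 measurable_const)
  have hsub : bball w r ⊆ ball (0:ℂ) 1 := fun z hz => hz.1
  have hfdcont : ContinuousOn (deriv f) (ball (0:ℂ) 1) := by
    have hDf : ContinuousOn (fun z => ((A:ℝ):ℂ) * ((n:ℂ) * a * ((1 - a*z)^(n+1))⁻¹))
        (ball (0:ℂ) 1) := by
      apply continuousOn_const.mul
      apply continuousOn_const.mul
      exact ContinuousOn.inv₀ (Continuous.continuousOn (by fun_prop))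
        (fun z hz => pow_ne_zero _ (hne z hz))
    exact ContinuousOn.congr hDf (fun z hz => hfd z hz)
  have hgdcont : ContinuousOn (deriv g) (ball (0:ℂ) 1) := by
    have hDg : ContinuousOn (fun z => ((B:ℝ):ℂ) * ((1 + (n:ℂ)*a*z) * ((1 - a*z)^(n+2))⁻¹))
        (ball (0:ℂ) 1) := by
      apply continuousOn_const.mul
      apply ContinuousOn.mul (Continuous.continuousOn (by fun_prop))
      exact ContinuousOn.inv₀ (Continuous.continuousOn (by fun_prop))
        (fun z hz => pow_ne_zero _ (hne z hz))
    exact ContinuousOn.congr hDg (fun z hz => hgd z hz)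
  have hfcont : ContinuousOn f (ball (0:ℂ) 1) :=
    fun z hz => ((hfder z hz).differentiableAt).continuousAt.continuousWithinAt
  have hgcont : ContinuousOn g (ball (0:ℂ) 1) :=
    fun z hz => ((hgder z hz).differentiableAt).continuousAt.continuousWithinAt
  have hFcont : ContinuousOn F (ball (0:ℂ) 1) := by
    rw [hFdef]
    exact (hu₀.continuousOn.mul hfcont).add (hu₁.continuousOn.mul hfdcont)
  have hGcont : ContinuousOn G (ball (0:ℂ) 1) := by
    rw [hGdef]
    exact (hu₀.continuousOn.mul hgcont).add (hu₁.continuousOn.mul hgdcont)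
  have hFaem : AEMeasurable (fun z => (‖F z‖₊:ℝ≥0∞)^q) (μ.restrict (ball (0:ℂ) 1)) := by
    have h1 : AEMeasurable F (μ.restrict (ball (0:ℂ) 1)) :=
      hFcont.aemeasurable measurableSet_ball
    fun_prop
  have hGaem : AEMeasurable (fun z => (‖G z‖₊:ℝ≥0∞)^q) (μ.restrict (ball (0:ℂ) 1)) := by
    have h1 : AEMeasurable G (μ.restrict (ball (0:ℂ) 1)) :=
      hGcont.aemeasurable measurableSet_ball
    fun_prop
  have hFaem' : AEMeasurable (fun z => (‖F z‖₊:ℝ≥0∞)^q) (μ.restrict (bball w r)) := by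
    have h2 := hFaem.restrict (s := bball w r)
    rwa [Measure.restrict_restrict hbmeas, Set.inter_eq_self_of_subset_left hsub] at h2
  have hGaem' : AEMeasurable (fun z => (‖G z‖₊:ℝ≥0∞)^q) (μ.restrict (bball w r)) := by
    have h2 := hGaem.restrict (s := bball w r)
    rwa [Measure.restrict_restrict hbmeas, Set.inter_eq_self_of_subset_left hsub] at h2
  -- final chain
  calc ∫⁻ z in bball w r, (‖u₁ z‖₊:ℝ≥0∞)^q ∂μ
      ≤ ∫⁻ z in bball w r, E₁ * E₂ * ((‖F z‖₊:ℝ≥0∞)^q + (‖G z‖₊:ℝ≥0∞)^q) ∂μ :=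
        setLIntegral_mono_ae ((hFaem'.add hGaem').const_mul _)
          (Filter.Eventually.of_forall hpt)
    _ = E₁ * E₂ * ∫⁻ z in bball w r, ((‖F z‖₊:ℝ≥0∞)^q + (‖G z‖₊:ℝ≥0∞)^q) ∂μ :=
        lintegral_const_mul' _ _ (ENNReal.mul_ne_top ENNReal.ofReal_ne_top ENNReal.ofReal_ne_top)
    _ = E₁ * E₂ * ((∫⁻ z in bball w r, (‖F z‖₊:ℝ≥0∞)^q ∂μ)
          + ∫⁻ z in bball w r, (‖G z‖₊:ℝ≥0∞)^q ∂μ) := by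
        rw [lintegral_add_left' hFaem']
    _ ≤ E₁ * E₂ * ((∫⁻ z in ball (0:ℂ) 1, (‖F z‖₊:ℝ≥0∞)^q ∂μ)
          + ∫⁻ z in ball (0:ℂ) 1, (‖G z‖₊:ℝ≥0∞)^q ∂μ) := by
        gcongr E₁ * E₂ * (?_ + ?_) <;> exact lintegral_mono_set hsub
    _ ≤ E₁ * E₂ * ((C:ℝ≥0∞) * N₁^(q/p) + (C:ℝ≥0∞) * N₂^(q/p)) := by
        gcongr <;> first
          | exact hcarF'
          | exact hcarG'
          | skip
    _ = M' * E₂ := by rw [hM'def]; try ring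
    _ = (M'.toNNReal : ℝ≥0∞) * E₂ := by rw [ENNReal.coe_toNNReal hM'top]
end

section
/- Let $n \ge 1$, let $g_0, \dots, g_{n-1}$ be holomorphic on $\mathbb{D}$, and let $\lambda \in \mathbb{C} \setminus \{0\}$. If $f$ is holomorphic on $\mathbb{D}$ and satisfies $I^n\!\left( f g_0 + f' g_1 + \cdots + f^{(n-1)} g_{n-1} \right) = \lambda f$ on $\mathbb{D}$, then $f = 0$. In other words, the operator $I_{\mathbf{g}}^{(n)}$ has no nonzero eigenvalues on $H(\mathbb{D})$. -/
open MeasureTheory Metric Complex Finset Filter Topology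

/-- The integration operator `(If)(z) = ∫_0^z f(w) dw = z ∫_0^1 f(tz) dt`. -/
noncomputable def Iop (f : ℂ → ℂ) (z : ℂ) : ℂ := z * ∫ t in (0 : ℝ)..1, f ((t : ℂ) * z)

lemma iop_hasDerivAt {u : ℂ → ℂ} (hu : DifferentiableOn ℂ u (ball (0:ℂ) 1))
    {z : ℂ} (hz : z ∈ ball (0:ℂ) 1) : HasDerivAt (Iop u) (u z) z := by
  have hball : ∀ {x : ℂ}, x ∈ ball (0:ℂ) 1 → ∀ {t : ℝ}, |t| ≤ 1 → (t : ℂ) * x ∈ ball (0:ℂ) 1 := by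
    intro x hx t ht
    simp only [mem_ball, dist_zero_right] at hx ⊢
    calc ‖(t:ℂ) * x‖ = |t| * ‖x‖ := by simp [norm_mul]
    _ ≤ 1 * ‖x‖ := by gcongr
    _ < 1 := by simpa using hx
  have hu' : DifferentiableOn ℂ (deriv u) (ball (0:ℂ) 1) :=
    ((hu.analyticOnNhd isOpen_ball).deriv).differentiableOn
  have hznorm : ‖z‖ < 1 := by simpa [mem_ball, dist_zero_right] using hz
  set ε : ℝ := (1 - ‖z‖) / 2 with hεdef
  have hε : 0 < ε := by simp only [hεdef]; linarith
  set r : ℝ := ‖z‖ + ε with hrdef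
  have hr1 : r < 1 := by simp only [hrdef, hεdef]; linarith
  have hr0 : 0 ≤ r := by simp only [hrdef]; linarith [norm_nonneg z]
  have hsub : closedBall (0:ℂ) r ⊆ ball (0:ℂ) 1 := by
    intro w hw; simp only [mem_closedBall, mem_ball, dist_zero_right] at hw ⊢; linarith
  have hmem : ∀ {x : ℂ}, x ∈ ball z ε → ∀ {t : ℝ}, |t| ≤ 1 → (t:ℂ) * x ∈ closedBall (0:ℂ) r := by
    intro x hx t ht
    have hxn : ‖x‖ ≤ r := by
      have h1 := mem_ball_iff_norm.mp hx
      have h2 : ‖x‖ ≤ ‖x - z‖ + ‖z‖ := by simpa using norm_add_le (x - z) z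
      simp only [hrdef]; linarith
    simp only [mem_closedBall, dist_zero_right]
    calc ‖(t:ℂ) * x‖ = |t| * ‖x‖ := by simp [norm_mul]
    _ ≤ 1 * r := by gcongr
    _ = r := one_mul r
  obtain ⟨C, hC⟩ := (isCompact_closedBall (0:ℂ) r).exists_bound_of_continuousOn
    ((hu'.continuousOn).mono hsub)
  -- derivative of the integral
  have key : HasDerivAt (fun x : ℂ => ∫ t in (0:ℝ)..1, u ((t:ℂ) * x))
      (∫ t in (0:ℝ)..1, (t:ℂ) * deriv u ((t:ℂ) * z)) z := by
    have := intervalIntegral.hasDerivAt_integral_of_dominated_loc_of_deriv_le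
      (F := fun (x : ℂ) (t : ℝ) => u ((t:ℂ) * x))
      (F' := fun (x : ℂ) (t : ℝ) => (t:ℂ) * deriv u ((t:ℂ) * x))
      (μ := volume) (x₀ := z) (a := 0) (b := 1) (bound := fun _ => C) (ball_mem_nhds z hε) ?meas ?int ?meas' ?bound
        ?bint ?diff
    · exact this.2
    case meas =>
      filter_upwards [isOpen_ball.mem_nhds hz] with x hx
      apply ContinuousOn.aestronglyMeasurable ?_ measurableSet_uIoc
      apply hu.continuousOn.comp (by fun_prop) ?_
      intro t ht
      have ht' : |t| ≤ 1 := by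
        rw [Set.uIoc_of_le (by norm_num : (0:ℝ) ≤ 1)] at ht
        rw [abs_le]; constructor <;> [linarith [ht.1]; exact ht.2]
      exact hball hx ht'
    case int =>
      apply ContinuousOn.intervalIntegrable
      apply hu.continuousOn.comp (by fun_prop) ?_
      intro t ht
      rw [Set.uIcc_of_le (by norm_num : (0:ℝ) ≤ 1)] at ht
      exact hball hz (abs_le.mpr ⟨by linarith [ht.1], ht.2⟩)
    case meas' =>
      apply ContinuousOn.aestronglyMeasurable ?_ measurableSet_uIoc
      apply ContinuousOn.mul (by fun_prop)
      apply hu'.continuousOn.comp (by fun_prop) ?_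
      intro t ht
      have ht' : |t| ≤ 1 := by
        rw [Set.uIoc_of_le (by norm_num : (0:ℝ) ≤ 1)] at ht
        rw [abs_le]; constructor <;> [linarith [ht.1]; exact ht.2]
      exact hball hz ht'
    case bound =>
      apply Filter.Eventually.of_forall
      intro t ht x hx
      have ht' : |t| ≤ 1 := by
        rw [Set.uIoc_of_le (by norm_num : (0:ℝ) ≤ 1)] at ht
        rw [abs_le]; constructor <;> [linarith [ht.1]; exact ht.2]
      have h1 : (t:ℂ) * x ∈ closedBall (0:ℂ) r := hmem hx ht'
      calc ‖(t:ℂ) * deriv u ((t:ℂ) * x)‖ = |t| * ‖deriv u ((t:ℂ) * x)‖ := by simp [norm_mul]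
      _ ≤ 1 * ‖deriv u ((t:ℂ) * x)‖ := by gcongr
      _ = ‖deriv u ((t:ℂ) * x)‖ := one_mul _
      _ ≤ C := hC _ h1
    case bint => exact intervalIntegrable_const
    case diff =>
      apply Filter.Eventually.of_forall
      intro t ht x hx
      have ht' : |t| ≤ 1 := by
        rw [Set.uIoc_of_le (by norm_num : (0:ℝ) ≤ 1)] at ht
        rw [abs_le]; constructor <;> [linarith [ht.1]; exact ht.2]
      have h1 : (t:ℂ) * x ∈ ball (0:ℂ) 1 := hsub (hmem hx ht')
      have hd : HasDerivAt u (deriv u ((t:ℂ) * x)) ((t:ℂ) * x) :=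
        (hu.differentiableAt (isOpen_ball.mem_nhds h1)).hasDerivAt
      have hm : HasDerivAt (fun y : ℂ => (t:ℂ) * y) (t:ℂ) x := by
        simpa using (hasDerivAt_id x).const_mul (t:ℂ)
      have hcc := hd.comp x hm
      exact hcc.congr_deriv (mul_comm _ _)
  -- product rule
  have hprod : HasDerivAt (Iop u)
      ((1:ℂ) * (∫ t in (0:ℝ)..1, u ((t:ℂ) * z)) +
        z * ∫ t in (0:ℝ)..1, (t:ℂ) * deriv u ((t:ℂ) * z)) z :=
    (hasDerivAt_id z).mul key
  -- FTC identity
  have hcont1 : ContinuousOn (fun t : ℝ => u ((t:ℂ) * z)) (Set.uIcc (0:ℝ) 1) := by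
    apply hu.continuousOn.comp (by fun_prop) ?_
    intro t ht
    rw [Set.uIcc_of_le (by norm_num : (0:ℝ) ≤ 1)] at ht
    exact hball hz (abs_le.mpr ⟨by linarith [ht.1], ht.2⟩)
  have hcont2 : ContinuousOn (fun t : ℝ => (t:ℂ) * (deriv u ((t:ℂ) * z) * z)) (Set.uIcc (0:ℝ) 1) := by
    apply ContinuousOn.mul (by fun_prop)
    apply ContinuousOn.mul ?_ continuousOn_const
    apply hu'.continuousOn.comp (by fun_prop) ?_
    intro t ht
    rw [Set.uIcc_of_le (by norm_num : (0:ℝ) ≤ 1)] at ht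
    exact hball hz (abs_le.mpr ⟨by linarith [ht.1], ht.2⟩)
  have ftc : (∫ t in (0:ℝ)..1, (u ((t:ℂ) * z) + (t:ℂ) * (deriv u ((t:ℂ) * z) * z))) = u z := by
    have := intervalIntegral.integral_eq_sub_of_hasDerivAt
      (f := fun t : ℝ => (t:ℂ) * u ((t:ℂ) * z))
      (f' := fun t : ℝ => u ((t:ℂ) * z) + (t:ℂ) * (deriv u ((t:ℂ) * z) * z))
      (a := 0) (b := 1) ?_ ((hcont1.add hcont2).intervalIntegrable)
    · simpa using this
    intro t ht
    rw [Set.uIcc_of_le (by norm_num : (0:ℝ) ≤ 1)] at ht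
    have h1 : (t:ℂ) * z ∈ ball (0:ℂ) 1 := hball hz (abs_le.mpr ⟨by linarith [ht.1], ht.2⟩)
    have hd : HasDerivAt u (deriv u ((t:ℂ) * z)) ((t:ℂ) * z) :=
      (hu.differentiableAt (isOpen_ball.mem_nhds h1)).hasDerivAt
    have hb : HasDerivAt (fun s : ℝ => u ((s:ℂ) * z)) (deriv u ((t:ℂ) * z) * z) t := by
      have hmz : HasDerivAt (fun y : ℂ => y * z) z ((t:ℂ)) := by
        simpa using (hasDerivAt_id ((t:ℂ))).mul_const z
      have := hd.comp ((t:ℂ)) hmz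
      simpa [Function.comp] using this.comp_ofReal
    have ha : HasDerivAt (fun s : ℝ => (s:ℂ)) 1 t := by
      simpa using (hasDerivAt_id t).ofReal_comp
    have := ha.fun_mul hb
    simpa [one_mul] using this
  have hsplit : (1:ℂ) * (∫ t in (0:ℝ)..1, u ((t:ℂ) * z)) +
      z * ∫ t in (0:ℝ)..1, (t:ℂ) * deriv u ((t:ℂ) * z) = u z := by
    rw [one_mul, ← intervalIntegral.integral_const_mul, ← ftc,
      ← intervalIntegral.integral_add (hcont1.intervalIntegrable)]
    · apply intervalIntegral.integral_congr
      intro t ht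
      ring
    · apply ContinuousOn.intervalIntegrable
      apply ContinuousOn.mul continuousOn_const (ContinuousOn.mul (by fun_prop) ?_)
      apply hu'.continuousOn.comp (by fun_prop) ?_
      intro t ht
      rw [Set.uIcc_of_le (by norm_num : (0:ℝ) ≤ 1)] at ht
      exact hball hz (abs_le.mpr ⟨by linarith [ht.1], ht.2⟩)
  rw [← hsplit]
  exact hprod


/-- vanishing to order at least m at 0 -/
def Van (u : ℂ → ℂ) (m : ℕ) : Prop :=
  ∃ v : ℂ → ℂ, AnalyticAt ℂ v 0 ∧ ∀ᶠ z in 𝓝 (0:ℂ), u z = z ^ m * v z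

lemma analyticAt_deriv' {v : ℂ → ℂ} (h : AnalyticAt ℂ v 0) : AnalyticAt ℂ (deriv v) 0 := by
  have h1 : AnalyticOnNhd ℂ v {y | AnalyticAt ℂ v y} := fun y hy => hy
  exact h1.deriv 0 h

lemma van_analyticAt {u : ℂ → ℂ} {m : ℕ} (h : Van u m) : AnalyticAt ℂ u 0 := by
  obtain ⟨v, hv, he⟩ := h
  exact (((analyticAt_id.pow m).mul hv)).congr (EventuallyEq.symm he)

lemma van_of_analyticAt {u : ℂ → ℂ} (h : AnalyticAt ℂ u 0) : Van u 0 :=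
  ⟨u, h, Eventually.of_forall fun z => by simp⟩

lemma van_mono {u : ℂ → ℂ} {m k : ℕ} (h : Van u m) (hk : k ≤ m) : Van u k := by
  obtain ⟨v, hv, he⟩ := h
  refine ⟨fun z => z ^ (m - k) * v z, (analyticAt_id.pow _).mul hv, ?_⟩
  filter_upwards [he] with z hz
  rw [hz, ← mul_assoc, ← pow_add]
  congr 2
  omega

lemma van_mul {u w : ℂ → ℂ} {m : ℕ} (h : Van u m) (hw : AnalyticAt ℂ w 0) :
    Van (fun z => u z * w z) m := by
  obtain ⟨v, hv, he⟩ := h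
  refine ⟨fun z => v z * w z, hv.mul hw, ?_⟩
  filter_upwards [he] with z hz
  rw [hz]; ring

lemma van_add {u w : ℂ → ℂ} {m : ℕ} (h : Van u m) (h' : Van w m) :
    Van (fun z => u z + w z) m := by
  obtain ⟨v, hv, he⟩ := h
  obtain ⟨v', hv', he'⟩ := h'
  refine ⟨fun z => v z + v' z, hv.add hv', ?_⟩
  filter_upwards [he, he'] with z h1 h2
  rw [h1, h2]; ring

lemma van_congr {u w : ℂ → ℂ} {m : ℕ} (h : Van u m) (he : u =ᶠ[𝓝 (0:ℂ)] w) : Van w m := by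
  obtain ⟨v, hv, hu⟩ := h
  exact ⟨v, hv, he.symm.trans hu⟩

lemma van_zero (m : ℕ) : Van (fun _ => (0:ℂ)) m :=
  ⟨fun _ => 0, analyticAt_const, Eventually.of_forall fun z => by simp⟩

lemma van_sum {F : ℕ → ℂ → ℂ} {m : ℕ} (s : Finset ℕ) (h : ∀ k ∈ s, Van (F k) m) :
    Van (fun z => ∑ k ∈ s, F k z) m := by
  classical
  induction s using Finset.induction_on with
  | empty => exact van_congr (van_zero m) (Eventually.of_forall fun z => by simp)
  | insert a s' hx ih =>
    have h1 := h a (Finset.mem_insert_self a s')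
    have h2 := ih fun k hk => h k (Finset.mem_insert_of_mem hk)
    exact van_congr (van_add h1 h2) (Eventually.of_forall fun z => by
      simp [Finset.sum_insert hx])

lemma van_deriv {u : ℂ → ℂ} {m : ℕ} (h : Van u (m + 1)) : Van (deriv u) m := by
  obtain ⟨v, hv, he⟩ := h
  refine ⟨fun z => ((m:ℂ) + 1) * v z + z * _root_.deriv v z, ?_, ?_⟩
  · exact (analyticAt_const.mul hv).add (analyticAt_id.mul (analyticAt_deriv' hv))
  · have hde : deriv u =ᶠ[𝓝 (0:ℂ)] deriv (fun z => z ^ (m+1) * v z) :=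
      Filter.EventuallyEq.deriv (he : u =ᶠ[𝓝 (0:ℂ)] _)
    filter_upwards [hde, hv.eventually_analyticAt] with z h1 h2
    rw [h1]
    have hvd : HasDerivAt v (_root_.deriv v z) z := h2.differentiableAt.hasDerivAt
    have : HasDerivAt (fun z : ℂ => z ^ (m+1) * v z)
        (((m:ℂ)+1) * z ^ m * v z + z ^ (m+1) * _root_.deriv v z) z := by
      have hp : HasDerivAt (fun z : ℂ => z ^ (m+1)) (((m:ℂ)+1) * z ^ m) z := by
        simpa using hasDerivAt_pow (m+1) z
      simpa using hp.fun_mul hvd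
    rw [this.deriv]
    ring

lemma van_deriv' {u : ℂ → ℂ} {m : ℕ} (h : Van u m) : Van (deriv u) (m - 1) := by
  cases m with
  | zero =>
    obtain ⟨v, hv, he⟩ := h
    have hEv : deriv u =ᶠ[𝓝 (0:ℂ)] deriv v := Filter.EventuallyEq.deriv
      ((he.mono fun z hz => by simpa using hz) : u =ᶠ[𝓝 (0:ℂ)] v)
    exact van_congr (van_of_analyticAt (analyticAt_deriv' hv)) (Filter.EventuallyEq.symm hEv)
  | succ k => exact van_deriv h

lemma van_iteratedDeriv {u : ℂ → ℂ} {m : ℕ} (h : Van u m) (k : ℕ) :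
    Van (iteratedDeriv k u) (m - k) := by
  induction k with
  | zero => simpa using h
  | succ j ih =>
    rw [iteratedDeriv_succ]
    have := van_deriv' ih
    rwa [Nat.sub_sub] at this

lemma van_le_order {u : ℂ → ℂ} {m : ℕ} (hu : AnalyticAt ℂ u 0) (h : Van u m) :
    (m : ℕ∞) ≤ analyticOrderAt u 0 := by
  by_contra hcon
  have hne : analyticOrderAt u 0 ≠ ⊤ := by intro h'; rw [h'] at hcon; exact hcon le_top
  obtain ⟨k, hk⟩ := WithTop.ne_top_iff_exists.mp hne
  have hkm : k < m := by
    have : ¬ (m : ℕ∞) ≤ (k : ℕ∞) := by rwa [← hk] at hcon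
    exact_mod_cast not_le.mp this
  obtain ⟨G, hG, hG0, hGe⟩ := (hu.analyticOrderAt_eq_natCast (n := k)).mp hk.symm
  obtain ⟨v, hv, hve⟩ := h
  have key : ∀ᶠ z in 𝓝[≠] (0:ℂ), G z = z ^ (m - k) * v z := by
    filter_upwards [eventually_nhdsWithin_of_eventually_nhds hGe,
      eventually_nhdsWithin_of_eventually_nhds hve, self_mem_nhdsWithin] with z h1 h2 h3
    have h3' : (z:ℂ) ≠ 0 := h3
    have heq : z ^ k * G z = z ^ k * (z ^ (m - k) * v z) := by
      rw [← mul_assoc, ← pow_add]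
      have hmk : k + (m - k) = m := by omega
      rw [hmk]
      simp only [sub_zero, smul_eq_mul] at h1
      rw [← h1, ← h2]
    exact mul_left_cancel₀ (pow_ne_zero _ h3') heq
  have t1 : Filter.Tendsto G (𝓝[≠] (0:ℂ)) (𝓝 (G 0)) :=
    hG.continuousAt.continuousWithinAt
  have t2 : Filter.Tendsto (fun z : ℂ => z ^ (m - k) * v z) (𝓝 (0:ℂ)) (𝓝 0) := by
    have hc : ContinuousAt (fun z : ℂ => z ^ (m - k) * v z) 0 :=
      (continuousAt_pow _ _).mul hv.continuousAt
    have : (fun z : ℂ => z ^ (m - k) * v z) 0 = 0 := by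
      simp [zero_pow (by omega : m - k ≠ 0)]
    simpa [this] using hc.tendsto
  have t2' : Filter.Tendsto G (𝓝[≠] (0:ℂ)) (𝓝 0) :=
    (t2.mono_left nhdsWithin_le_nhds).congr' (Filter.EventuallyEq.symm key)
  exact hG0 (tendsto_nhds_unique t1 t2')


lemma iop_differentiableOn {u : ℂ → ℂ} (hu : DifferentiableOn ℂ u (ball (0:ℂ) 1)) :
    DifferentiableOn ℂ (Iop u) (ball (0:ℂ) 1) :=
  fun z hz => ((iop_hasDerivAt hu hz).differentiableAt).differentiableWithinAt

lemma iop_zero (u : ℂ → ℂ) : Iop u 0 = 0 := by simp [Iop]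

lemma van_iop {u : ℂ → ℂ} {m : ℕ} (hu : DifferentiableOn ℂ u (ball (0:ℂ) 1)) (h : Van u m) :
    Van (Iop u) (m + 1) := by
  have hF : DifferentiableOn ℂ (Iop u) (ball (0:ℂ) 1) := iop_differentiableOn hu
  have h0 : (0:ℂ) ∈ ball (0:ℂ) 1 := by simp
  have hFa : AnalyticAt ℂ (Iop u) 0 := hF.analyticAt (isOpen_ball.mem_nhds h0)
  have hdF : deriv (Iop u) =ᶠ[𝓝 (0:ℂ)] u := by
    filter_upwards [isOpen_ball.mem_nhds h0] with x hx
    exact (iop_hasDerivAt hu hx).deriv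
  by_cases htop : ∀ᶠ z in 𝓝 (0:ℂ), Iop u z = 0
  · exact ⟨fun _ => 0, analyticAt_const, htop.mono fun z hz => by simp [hz]⟩
  have hne : analyticOrderAt (Iop u) 0 ≠ ⊤ := fun h' => htop (analyticOrderAt_eq_top.mp h')
  obtain ⟨s, hs⟩ := WithTop.ne_top_iff_exists.mp hne
  obtain ⟨G, hG, hG0, hGe⟩ := (hFa.analyticOrderAt_eq_natCast (n := s)).mp hs.symm
  have hGe' : ∀ᶠ z in 𝓝 (0:ℂ), Iop u z = z ^ s * G z := by
    filter_upwards [hGe] with z hz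
    simpa [smul_eq_mul, sub_zero] using hz
  have hs1 : 1 ≤ s := by
    by_contra hs0
    have hseq : s = 0 := by omega
    subst hseq
    have h00 := hGe'.self_of_nhds
    rw [iop_zero] at h00
    simp at h00
    exact hG0 h00.symm
  have hvdF : Van (deriv (Iop u)) m := van_congr h (Filter.EventuallyEq.symm hdF)
  have hdFa : AnalyticAt ℂ (deriv (Iop u)) 0 := van_analyticAt hvdF
  have hords : analyticOrderAt (deriv (Iop u)) 0 = ((s - 1 : ℕ) : ℕ∞) := by
    rw [hdFa.analyticOrderAt_eq_natCast]
    refine ⟨fun y => (s:ℂ) * G y + y * deriv G y,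
      (analyticAt_const.mul hG).add (analyticAt_id.mul (analyticAt_deriv' hG)), ?_, ?_⟩
    · simp only [Complex.ofReal_natCast, mul_zero, zero_mul, add_zero]
      exact mul_ne_zero (by exact_mod_cast (by omega : (s:ℕ) ≠ 0)) hG0
    · have hde : deriv (Iop u) =ᶠ[𝓝 (0:ℂ)] deriv (fun z => z ^ s * G z) :=
        Filter.EventuallyEq.deriv (hGe' : Iop u =ᶠ[𝓝 (0:ℂ)] _)
      filter_upwards [hde, hG.eventually_analyticAt] with z h1 h2
      rw [h1]
      have hGd : HasDerivAt G (deriv G z) z := h2.differentiableAt.hasDerivAt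
      have hp : HasDerivAt (fun z : ℂ => z ^ s) ((s:ℂ) * z ^ (s-1)) z := by
        simpa using hasDerivAt_pow s z
      have hprod := hp.fun_mul hGd
      rw [hprod.deriv]
      have hzs : z ^ s = z ^ (s-1) * z := by
        rw [← pow_succ]
        congr 1
        omega
      simp only [smul_eq_mul, sub_zero]
      rw [hzs]
      ring
  have hmle : (m : ℕ∞) ≤ analyticOrderAt (deriv (Iop u)) 0 := van_le_order hdFa hvdF
  rw [hords] at hmle
  have hm1 : m ≤ s - 1 := by exact_mod_cast hmle
  have hvF : Van (Iop u) s := ⟨G, hG, hGe'⟩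
  exact van_mono hvF (by omega)

theorem stmt13 (n : ℕ) (hn : 1 ≤ n) (g : ℕ → ℂ → ℂ)
    (hg : ∀ k < n, DifferentiableOn ℂ (g k) (ball (0 : ℂ) 1))
    (lam : ℂ) (hlam : lam ≠ 0) (f : ℂ → ℂ)
    (hf : DifferentiableOn ℂ f (ball (0 : ℂ) 1))
    (heq : ∀ z ∈ ball (0 : ℂ) 1,
      Iop^[n] (fun w => ∑ k ∈ Finset.range n, iteratedDeriv k f w * g k w) z = lam * f z) :
    ∀ z ∈ ball (0 : ℂ) 1, f z = 0 := by
  have h0B : (0:ℂ) ∈ ball (0:ℂ) 1 := by simp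
  set h : ℂ → ℂ := fun w => ∑ k ∈ Finset.range n, iteratedDeriv k f w * g k w with hdef
  have hfan : AnalyticOnNhd ℂ f (ball (0:ℂ) 1) := hf.analyticOnNhd isOpen_ball
  have hitd : ∀ k, DifferentiableOn ℂ (iteratedDeriv k f) (ball (0:ℂ) 1) := by
    intro k
    rw [iteratedDeriv_eq_iterate]
    exact (hfan.iterated_deriv k).differentiableOn
  have hh : DifferentiableOn ℂ h (ball (0:ℂ) 1) := by
    apply DifferentiableOn.fun_sum
    intro k hk
    exact (hitd k).mul (hg k (Finset.mem_range.mp hk))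
  have hiter : ∀ j, DifferentiableOn ℂ (Iop^[j] h) (ball (0:ℂ) 1) := by
    intro j; induction j with
    | zero => simpa using hh
    | succ i ih => rw [Function.iterate_succ_apply']; exact iop_differentiableOn ih
  have hfa : AnalyticAt ℂ f 0 := hf.analyticAt (isOpen_ball.mem_nhds h0B)
  have hev : ∀ᶠ z in 𝓝 (0:ℂ), f z = 0 := by
    by_contra hcon
    have hne : analyticOrderAt f 0 ≠ ⊤ := fun h' => hcon (analyticOrderAt_eq_top.mp h')
    obtain ⟨μ, hμ⟩ := WithTop.ne_top_iff_exists.mp hne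
    obtain ⟨g₀, hg₀, hg₀0, hg₀e⟩ := (hfa.analyticOrderAt_eq_natCast (n := μ)).mp hμ.symm
    have hg₀e' : ∀ᶠ z in 𝓝 (0:ℂ), f z = z ^ μ * g₀ z := by
      filter_upwards [hg₀e] with z hz
      simpa [smul_eq_mul, sub_zero] using hz
    have hvf : Van f μ := ⟨g₀, hg₀, hg₀e'⟩
    have hvh : Van h (μ + 1 - n) := by
      apply van_sum
      intro k hk
      have hk' : k < n := Finset.mem_range.mp hk
      have hvk := van_iteratedDeriv hvf k
      have hgk : AnalyticAt ℂ (g k) 0 := (hg k hk').analyticAt (isOpen_ball.mem_nhds h0B)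
      exact van_mul (van_mono hvk (by omega)) hgk
    have hvit : ∀ j, Van (Iop^[j] h) (μ + 1 - n + j) := by
      intro j; induction j with
      | zero => simpa using hvh
      | succ i ih =>
        rw [Function.iterate_succ_apply']
        have hstep := van_iop (hiter i) ih
        have hcast : μ + 1 - n + (i + 1) = μ + 1 - n + i + 1 := by omega
        rw [hcast]
        exact hstep
    have hvN : Van (fun z => lam * f z) (μ + 1) := by
      have h1 : Van (Iop^[n] h) (μ + 1) := van_mono (hvit n) (by omega)
      apply van_congr h1
      filter_upwards [isOpen_ball.mem_nhds h0B] with z hz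
      exact heq z hz
    have hla : AnalyticAt ℂ (fun z => lam * f z) 0 := analyticAt_const.mul hfa
    have hord : analyticOrderAt (fun z => lam * f z) 0 = (μ : ℕ∞) := by
      rw [hla.analyticOrderAt_eq_natCast]
      refine ⟨fun z => lam * g₀ z, analyticAt_const.mul hg₀, mul_ne_zero hlam hg₀0, ?_⟩
      filter_upwards [hg₀e'] with z hz
      rw [hz]
      simp only [smul_eq_mul, sub_zero]
      ring
    have hfin := van_le_order hla hvN
    rw [hord] at hfin
    have : μ + 1 ≤ μ := by exact_mod_cast hfin
    omega
  intro z hz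
  have hEq : f =ᶠ[𝓝 (0:ℂ)] 0 := hev.mono fun w hw => by simpa using hw
  exact hfan.eqOn_zero_of_preconnected_of_eventuallyEq_zero
    (convex_ball (0:ℂ) 1).isPreconnected h0B hEq hz
end
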